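/- arXiv:1303.3903 — 16 statements merged into one kernel-verified Lean document; each statement's English description precedes it below -/
import Mathlib

section
/- Let R be a commutative ring, A a commutative R-algebra, and {·,·} a Poisson structure on A. Then there exists a unique R-bilinear map [·,·] : Ω[A⁄R] × Ω[A⁄R] → Ω[A⁄R] such that [a•Du, b•Dv] = a{u,b}•Dv + b{a,v}•Du + (ab)•D{u,v} for all a,b,u,v ∈ A. Moreover this bracket is alternating and satisfies the Jacobi identity, so it makes Ω[A⁄R] a Lie algebra over R; in particular [Du, Dv] = D{u,v} for all u,v ∈ A. (Theorem 3.8, first part.) -/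
open Finsupp

namespace PoissonAux

variable {R : Type*} [CommRing R]

section descend
variable {M N Q : Type*} [AddCommGroup M] [AddCommGroup N] [AddCommGroup Q]
  [Module R M] [Module R N] [Module R Q]

theorem descend_congr (e : M →ₗ[R] N) (l : M →ₗ[R] Q) (h : ∀ x, e x = 0 → l x = 0)
    {m m' : M} (hmm : e m = e m') : l m = l m' := by
  have := h (m - m') (by simp [map_sub, hmm])
  rw [map_sub, sub_eq_zero] at this
  exact this

/-- Descend a linear map along a surjection whose kernel it kills. -/
noncomputable def descend (e : M →ₗ[R] N) (he : Function.Surjective e)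
    (l : M →ₗ[R] Q) (h : ∀ x, e x = 0 → l x = 0) : N →ₗ[R] Q where
  toFun n := l (he n).choose
  map_add' n₁ n₂ := by
    rw [← map_add l]
    exact descend_congr e l h (by
      rw [map_add, (he n₁).choose_spec, (he n₂).choose_spec, (he (n₁ + n₂)).choose_spec])
  map_smul' r n := by
    simp only [RingHom.id_apply]
    rw [← map_smul l]
    exact descend_congr e l h (by
      rw [map_smul, (he n).choose_spec, (he (r • n)).choose_spec])

theorem descend_apply (e : M →ₗ[R] N) (he : Function.Surjective e)
    (l : M →ₗ[R] Q) (h : ∀ x, e x = 0 → l x = 0) (m : M) :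
    descend e he l h (e m) = l m :=
  descend_congr e l h ((he (e m)).choose_spec)

end descend

variable {A : Type*} [CommRing A] [Algebra R A]
variable (P : A →ₗ[R] A →ₗ[R] A)

theorem antiP (halt : ∀ a : A, P a a = 0) (x y : A) : P x y = -P y x := by
  have h := halt (x + y)
  simp only [map_add, LinearMap.add_apply] at h
  linear_combination h - halt x - halt y

theorem oneP (hleib : ∀ a b c : A, P (a * b) c = a * P b c + P a c * b) (x : A) :
    P 1 x = 0 := by
  have h := hleib 1 1 x
  simp only [one_mul, mul_one] at h
  linear_combination -h

theorem P_one (halt : ∀ a : A, P a a = 0)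
    (hleib : ∀ a b c : A, P (a * b) c = a * P b c + P a c * b) (x : A) : P x 1 = 0 := by
  rw [antiP P halt, oneP P hleib, neg_zero]

theorem algP (hleib : ∀ a b c : A, P (a * b) c = a * P b c + P a c * b) (r : R) (x : A) :
    P (algebraMap R A r) x = 0 := by
  rw [Algebra.algebraMap_eq_smul_one, map_smul, LinearMap.smul_apply, oneP P hleib, smul_zero]

theorem P_alg (halt : ∀ a : A, P a a = 0)
    (hleib : ∀ a b c : A, P (a * b) c = a * P b c + P a c * b) (x : A) (r : R) :
    P x (algebraMap R A r) = 0 := by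
  rw [antiP P halt, algP P hleib, neg_zero]

theorem leibP₂ (halt : ∀ a : A, P a a = 0)
    (hleib : ∀ a b c : A, P (a * b) c = a * P b c + P a c * b) (x y z : A) :
    P x (y * z) = y * P x z + P x y * z := by
  linear_combination (antiP P halt x (y * z)) - hleib y z x - y * (antiP P halt x z)
    - (antiP P halt x y) * z

local notation "Ω" => KaehlerDifferential R A
local notation "dd" => KaehlerDifferential.D R A

/-- `c ↦ c • D w`. -/
noncomputable def sD (w : A) : A →ₗ[R] Ω :=
  (LinearMap.toSpanSingleton A Ω (dd w)).restrictScalars R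

@[simp] theorem sD_apply (w c : A) : sD (R := R) w c = c • dd w := rfl

/-- `b ↦ (a * P u b) • D v + (b * P a v) • D u + (a * b) • D (P u v)`. -/
noncomputable def innerMap (u a v : A) : A →ₗ[R] Ω :=
  (sD v).comp ((LinearMap.mulLeft R a).comp (P u))
    + (sD u).comp (LinearMap.mulRight R (P a v))
    + (sD (P u v)).comp (LinearMap.mulLeft R a)

@[simp] theorem innerMap_apply (u a v b : A) :
    innerMap P u a v b
      = (a * P u b) • dd v + (b * P a v) • dd u + (a * b) • dd (P u v) := by
  simp [innerMap]

noncomputable def midMap (u : A) : A →ₗ[R] ((A →₀ A) →ₗ[R] Ω) where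
  toFun a := Finsupp.lsum R (fun v => innerMap P u a v)
  map_add' a a' := by
    apply Finsupp.lhom_ext
    intro v b
    simp only [Finsupp.lsum_single, innerMap_apply, LinearMap.add_apply, map_add,
      LinearMap.add_apply]
    module
  map_smul' r a := by
    apply Finsupp.lhom_ext
    intro v b
    simp only [Finsupp.lsum_single, innerMap_apply, LinearMap.smul_apply, map_smul,
      RingHom.id_apply, smul_mul_assoc, mul_smul_comm, smul_assoc, smul_add]

noncomputable def lOne : (A →₀ A) →ₗ[R] ((A →₀ A) →ₗ[R] Ω) :=
  Finsupp.lsum R (fun u => midMap P u)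

@[simp] theorem lOne_single_single (u a v b : A) :
    lOne P (single u a) (single v b)
      = (a * P u b) • dd v + (b * P a v) • dd u + (a * b) • dd (P u v) := by
  simp [lOne, midMap]

/-- `single u a ↦ a * P u c`. -/
noncomputable def gammaMap (c : A) : (A →₀ A) →ₗ[R] A :=
  Finsupp.lsum R (fun u => LinearMap.mulRight R (P u c))

@[simp] theorem gammaMap_single (c u a : A) : gammaMap P c (single u a) = a * P u c := by
  simp [gammaMap]

/-- `single v b ↦ b * P c v`. -/
noncomputable def lamMap (c : A) : (A →₀ A) →ₗ[R] A :=
  Finsupp.lsum R (fun v => LinearMap.mulRight R (P c v))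

@[simp] theorem lamMap_single (c v b : A) : lamMap P c (single v b) = b * P c v := by
  simp [lamMap]

/-- The A-linear total map. -/
noncomputable def eMap : (A →₀ A) →ₗ[R] Ω :=
  (Finsupp.linearCombination A (dd)).restrictScalars R

@[simp] theorem eMap_single (u a : A) : eMap (R := R) (single u a) = a • dd u := by
  simp [eMap]

theorem eMap_surjective : Function.Surjective (eMap (R := R) (A := A)) :=
  KaehlerDifferential.linearCombination_surjective R A

theorem mem_kerTotal_of_eMap_eq_zero {ξ : A →₀ A} (h : eMap (R := R) ξ = 0) :
    ξ ∈ KaehlerDifferential.kerTotal R A := by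
  rw [← KaehlerDifferential.kerTotal_eq]
  exact h

theorem eMap_eq_zero_of_mem_kerTotal {ξ : A →₀ A}
    (h : ξ ∈ KaehlerDifferential.kerTotal R A) : eMap (R := R) ξ = 0 := by
  rw [← KaehlerDifferential.kerTotal_eq] at h
  exact h

/-- One summand of the anchor map. -/
noncomputable def rhoSingle (u : A) : A →ₗ[R] (A →ₗ[R] A) where
  toFun a := a • P u
  map_add' a a' := add_smul a a' (P u)
  map_smul' r a := smul_assoc r a (P u)

noncomputable def rhoAux : (A →₀ A) →ₗ[R] (A →ₗ[R] A) :=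
  Finsupp.lsum R (fun u => rhoSingle P u)

@[simp] theorem rhoAux_single (u a f : A) : rhoAux P (single u a) f = a * P u f := by
  simp [rhoAux, rhoSingle]

theorem rhoAux_smul (c : A) (ξ : A →₀ A) : rhoAux P (c • ξ) = c • rhoAux P ξ := by
  induction ξ using Finsupp.induction_linear with
  | zero => simp
  | add ξ ξ' h h' => simp [smul_add, map_add, h, h']
  | single u a =>
    apply LinearMap.ext
    intro f
    rw [show c • Finsupp.single u a = Finsupp.single u (c * a) by
      rw [Finsupp.smul_single, smul_eq_mul]]
    rw [rhoAux_single, LinearMap.smul_apply, rhoAux_single, smul_eq_mul, mul_assoc]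

section twist

variable (halt : ∀ a : A, P a a = 0)
variable (hleib : ∀ a b c : A, P (a * b) c = a * P b c + P a c * b)

include halt hleib

theorem twist₂ (ξ : A →₀ A) (c : A) (η : A →₀ A) :
    lOne P ξ (c • η) = c • lOne P ξ η + (gammaMap P c ξ) • eMap (R := R) η := by
  induction ξ using Finsupp.induction_linear with
  | zero => simp
  | add ξ ξ' h h' =>
    simp only [map_add, LinearMap.add_apply, h, h', add_smul]
    module
  | single u a =>
    induction η using Finsupp.induction_linear with
    | zero => simp
    | add η η' h h' =>
      simp only [smul_add, map_add, h, h']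
      module
    | single v b =>
      rw [Finsupp.smul_single]
      simp only [smul_eq_mul, lOne_single_single, gammaMap_single, eMap_single]
      rw [leibP₂ P halt hleib u c b]
      module

theorem twist₁ (c : A) (ξ η : A →₀ A) :
    lOne P (c • ξ) η = c • lOne P ξ η + (lamMap P c η) • eMap (R := R) ξ := by
  induction η using Finsupp.induction_linear with
  | zero => simp
  | add η η' h h' =>
    simp only [map_add, h, h']
    module
  | single v b =>
    induction ξ using Finsupp.induction_linear with
    | zero => simp
    | add ξ ξ' h h' =>
      simp only [smul_add, map_add, LinearMap.add_apply, h, h']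
      module
    | single u a =>
      rw [Finsupp.smul_single]
      simp only [smul_eq_mul, lOne_single_single, lamMap_single, eMap_single]
      rw [hleib c a v]
      module

theorem hker₂ (η : A →₀ A) (hη : η ∈ KaehlerDifferential.kerTotal R A) (ξ : A →₀ A) :
    lOne P ξ η = 0 := by
  induction hη using Submodule.span_induction generalizing ξ with
  | mem g hg =>
    induction ξ using Finsupp.induction_linear with
    | zero => simp
    | add ξ ξ' h h' => simp [map_add, LinearMap.add_apply, h, h']
    | single u a =>
      obtain (⟨⟨x, y⟩, rfl⟩ | ⟨⟨x, y⟩, rfl⟩) | ⟨r, rfl⟩ := hg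
      · simp only [map_add, map_sub, lOne_single_single, P_one P halt hleib,
          map_add, LinearMap.map_add, mul_zero, zero_smul, mul_one, one_mul]
        module
      · simp only [map_add, map_sub, lOne_single_single, P_one P halt hleib,
          mul_zero, zero_smul, mul_one, one_mul]
        rw [leibP₂ P halt hleib a x y, leibP₂ P halt hleib u x y]
        simp only [map_add, Derivation.leibniz]
        module
      · simp [lOne_single_single, P_one P halt hleib, P_alg P halt hleib]
  | zero => simp
  | add η η' _ _ h h' => simp [map_add, h, h']
  | smul c η hη h =>
    rw [twist₂ P halt hleib, h, eMap_eq_zero_of_mem_kerTotal hη]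
    simp

theorem hker₁ (ξ : A →₀ A) (hξ : ξ ∈ KaehlerDifferential.kerTotal R A) (η : A →₀ A) :
    lOne P ξ η = 0 := by
  induction hξ using Submodule.span_induction generalizing η with
  | mem g hg =>
    induction η using Finsupp.induction_linear with
    | zero => simp
    | add η η' h h' => simp [map_add, h, h']
    | single v b =>
      obtain (⟨⟨x, y⟩, rfl⟩ | ⟨⟨x, y⟩, rfl⟩) | ⟨r, rfl⟩ := hg
      · simp only [map_add, map_sub, LinearMap.add_apply, LinearMap.sub_apply,
          lOne_single_single, oneP P hleib, mul_zero, zero_smul, mul_one, one_mul]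
        module
      · simp only [map_add, map_sub, LinearMap.add_apply, LinearMap.sub_apply,
          lOne_single_single, oneP P hleib, mul_zero, zero_smul, mul_one, one_mul]
        rw [hleib x y b, hleib x y v]
        simp only [map_add, Derivation.leibniz]
        module
      · simp [lOne_single_single, oneP P hleib, algP P hleib]
  | zero => simp
  | add ξ ξ' _ _ h h' => simp [map_add, LinearMap.add_apply, h, h']
  | smul c ξ hξ h =>
    rw [twist₁ P halt hleib, h, eMap_eq_zero_of_mem_kerTotal hξ]
    simp

/-- The bracket, first descended in the second variable. -/
noncomputable def bmapAux : (A →₀ A) →ₗ[R] (Ω →ₗ[R] Ω) where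
  toFun ξ := descend eMap eMap_surjective (lOne P ξ)
    (fun η hη => hker₂ P halt hleib η (mem_kerTotal_of_eMap_eq_zero hη) ξ)
  map_add' ξ ξ' := by
    apply LinearMap.ext
    intro ω
    obtain ⟨η, rfl⟩ := eMap_surjective (R := R) (A := A) ω
    simp [descend_apply]
  map_smul' r ξ := by
    apply LinearMap.ext
    intro ω
    obtain ⟨η, rfl⟩ := eMap_surjective (R := R) (A := A) ω
    simp [descend_apply]

/-- The Poisson--Rinehart bracket on Kähler differentials. -/
noncomputable def bmap : Ω →ₗ[R] Ω →ₗ[R] Ω :=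
  descend eMap eMap_surjective (bmapAux P halt hleib)
    (fun ξ hξ => by
      apply LinearMap.ext
      intro ω
      obtain ⟨η, rfl⟩ := eMap_surjective (R := R) (A := A) ω
      simp only [bmapAux, LinearMap.coe_mk, AddHom.coe_mk, descend_apply, LinearMap.zero_apply]
      exact hker₁ P halt hleib ξ (mem_kerTotal_of_eMap_eq_zero hξ) η)

theorem bmap_apply (a b u v : A) :
    bmap P halt hleib (a • dd u) (b • dd v)
      = (a * P u b) • dd v + (b * P a v) • dd u + (a * b) • dd (P u v) := by
  rw [← eMap_single (R := R) u a, ← eMap_single (R := R) v b]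
  rw [bmap, descend_apply]
  simp only [bmapAux, LinearMap.coe_mk, AddHom.coe_mk, descend_apply]
  simp

theorem rhoAux_ker (ξ : A →₀ A) (hξ : ξ ∈ KaehlerDifferential.kerTotal R A) :
    rhoAux P ξ = 0 := by
  induction hξ using Submodule.span_induction with
  | mem g hg =>
    apply LinearMap.ext
    intro f
    obtain (⟨⟨x, y⟩, rfl⟩ | ⟨⟨x, y⟩, rfl⟩) | ⟨r, rfl⟩ := hg
    · simp [map_add, LinearMap.add_apply]
    · simp only [map_add, map_sub, LinearMap.add_apply, LinearMap.sub_apply,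
        rhoAux_single, LinearMap.zero_apply, one_mul]
      linear_combination -hleib x y f
    · simp [algP P hleib]
  | zero => simp
  | add ξ ξ' _ _ h h' => simp [map_add, h, h']
  | smul c ξ _ h => rw [rhoAux_smul, h, smul_zero]

/-- The anchor map `Ω[A⁄R] → End(A)`, `a • D u ↦ a * P u ·`. -/
noncomputable def rhoMap : Ω →ₗ[R] (A →ₗ[R] A) :=
  descend eMap eMap_surjective (rhoAux P)
    (fun ξ hξ => rhoAux_ker P halt hleib ξ (mem_kerTotal_of_eMap_eq_zero hξ))

theorem rhoMap_apply (a u f : A) :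
    rhoMap P halt hleib (a • dd u) f = a * P u f := by
  rw [← eMap_single (R := R) u a, rhoMap, descend_apply]
  simp

end twist

/-- Every element of `Ω[A⁄R]` is a finite sum of elements of the form `a • D u`. -/
theorem mem_closure_smul_D (x : Ω) :
    x ∈ AddSubmonoid.closure {y : Ω | ∃ a u : A, y = a • dd u} := by
  let N : Submodule A Ω :=
    { carrier := AddSubmonoid.closure {y : Ω | ∃ a u : A, y = a • dd u}
      add_mem' := fun h h' => add_mem h h'
      zero_mem' := zero_mem _
      smul_mem' := fun c x hx => by
        induction hx using AddSubmonoid.closure_induction with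
        | mem y hy =>
          obtain ⟨a, u, rfl⟩ := hy
          rw [smul_smul]
          exact AddSubmonoid.subset_closure ⟨c * a, u, rfl⟩
        | zero => rw [smul_zero]; exact zero_mem _
        | add y z _ _ hy hz => rw [smul_add]; exact add_mem hy hz }
  have hN : (⊤ : Submodule A Ω) ≤ N := by
    rw [← KaehlerDifferential.span_range_derivation]
    rw [Submodule.span_le]
    rintro _ ⟨u, rfl⟩
    exact AddSubmonoid.subset_closure ⟨1, u, (one_smul A _).symm⟩
  exact hN trivial

theorem omega_induction (p : Ω → Prop) (hgen : ∀ a u : A, p (a • dd u)) (h0 : p 0)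
    (hadd : ∀ x y, p x → p y → p (x + y)) : ∀ x, p x := fun x =>
  AddSubmonoid.closure_induction (motive := fun y _ => p y)
    (fun y hy => by obtain ⟨a, u, rfl⟩ := hy; exact hgen a u) h0
    (fun a b _ _ ha hb => hadd a b ha hb) (mem_closure_smul_D x)

end PoissonAux

/-- **Theorem 3.8, first part.**
Let `R` be a commutative ring, `A` a commutative `R`-algebra and `P` a Poisson
structure on `A`.  Then there exists a unique `R`-bilinear bracket `B` on the
module of Kähler differentials `Ω[A⁄R]` satisfying
`[a•Du, b•Dv] = a{u,b}•Dv + b{a,v}•Du + (ab)•D{u,v}`.  Moreover this bracket is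
alternating and satisfies the Jacobi identity (so it makes `Ω[A⁄R]` a Lie
algebra over `R`); in particular `[Du, Dv] = D{u,v}`. -/
theorem poisson_rinehart_bracket_exists_unique
    (R A : Type*) [CommRing R] [CommRing A] [Algebra R A]
    (P : A →ₗ[R] A →ₗ[R] A)
    (halt : ∀ a : A, P a a = 0)
    (hjac : ∀ a b c : A, P a (P b c) + P b (P c a) + P c (P a b) = 0)
    (hleib : ∀ a b c : A, P (a * b) c = a * P b c + P a c * b) :
    (∃! B : KaehlerDifferential R A →ₗ[R] KaehlerDifferential R A →ₗ[R]
        KaehlerDifferential R A,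
      ∀ a b u v : A,
        B (a • KaehlerDifferential.D R A u) (b • KaehlerDifferential.D R A v)
          = (a * P u b) • KaehlerDifferential.D R A v
            + (b * P a v) • KaehlerDifferential.D R A u
            + (a * b) • KaehlerDifferential.D R A (P u v)) ∧
    (∀ B : KaehlerDifferential R A →ₗ[R] KaehlerDifferential R A →ₗ[R]
        KaehlerDifferential R A,
      (∀ a b u v : A,
        B (a • KaehlerDifferential.D R A u) (b • KaehlerDifferential.D R A v)
          = (a * P u b) • KaehlerDifferential.D R A v
            + (b * P a v) • KaehlerDifferential.D R A u
            + (a * b) • KaehlerDifferential.D R A (P u v)) →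
      (∀ α, B α α = 0) ∧
      (∀ α β γ, B α (B β γ) + B β (B γ α) + B γ (B α β) = 0) ∧
      (∀ u v : A,
        B (KaehlerDifferential.D R A u) (KaehlerDifferential.D R A v)
          = KaehlerDifferential.D R A (P u v))) := by
  classical
  set dd := KaehlerDifferential.D R A with hdd
  -- uniqueness of any bracket satisfying the formula
  have huniq : ∀ B₁ B₂ : KaehlerDifferential R A →ₗ[R] KaehlerDifferential R A →ₗ[R]
      KaehlerDifferential R A,
      (∀ a b u v : A, B₁ (a • dd u) (b • dd v)
        = (a * P u b) • dd v + (b * P a v) • dd u + (a * b) • dd (P u v)) →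
      (∀ a b u v : A, B₂ (a • dd u) (b • dd v)
        = (a * P u b) • dd v + (b * P a v) • dd u + (a * b) • dd (P u v)) →
      B₁ = B₂ := by
    intro B₁ B₂ h₁ h₂
    apply LinearMap.ext
    refine PoissonAux.omega_induction (fun α => B₁ α = B₂ α) ?_ (by simp) ?_
    · intro a u
      apply LinearMap.ext
      refine PoissonAux.omega_induction (fun β => B₁ (a • dd u) β = B₂ (a • dd u) β)
        ?_ (by simp) ?_
      · intro b v
        rw [h₁, h₂]
      · intro x y hx hy
        simp [map_add, hx, hy]
    · intro x y hx hy
      simp [map_add, LinearMap.add_apply, hx, hy]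
  refine ⟨⟨PoissonAux.bmap P halt hleib,
      fun a b u v => PoissonAux.bmap_apply P halt hleib a b u v,
      fun B' hB' => huniq B' _ hB' (fun a b u v => PoissonAux.bmap_apply P halt hleib a b u v)⟩,
    ?_⟩
  -- properties for any bracket satisfying the formula
  intro B hB
  set ρ := PoissonAux.rhoMap P halt hleib with hρdef
  have hρ : ∀ a u f : A, ρ (a • dd u) f = a * P u f :=
    fun a u f => PoissonAux.rhoMap_apply P halt hleib a u f
  -- antisymmetry
  have hanti : ∀ α β, B α β = -B β α := by
    refine PoissonAux.omega_induction (fun α => ∀ β, B α β = -B β α) ?_ (by simp) ?_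
    · intro a u
      refine PoissonAux.omega_induction (fun β => B (a • dd u) β = -B β (a • dd u))
        ?_ (by simp) ?_
      · intro b v
        rw [hB a b u v, hB b a v u, PoissonAux.antiP P halt v a,
          PoissonAux.antiP P halt b u, PoissonAux.antiP P halt v u, map_neg]
        module
      · intro x y hx hy
        simp only [map_add, LinearMap.add_apply, hx, hy]
        module
    · intro x y hx hy β
      simp only [map_add, LinearMap.add_apply, hx, hy]
      module
  -- alternating
  have haltB : ∀ α, B α α = 0 := by
    refine PoissonAux.omega_induction (fun α => B α α = 0) ?_ (by simp) ?_
    · intro a u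
      rw [hB a a u u, halt u, PoissonAux.antiP P halt u a]
      simp only [map_zero, smul_zero, mul_neg]
      module
    · intro x y hx hy
      simp only [map_add, LinearMap.add_apply, hx, hy]
      rw [hanti x y]
      module
  -- the anchor is a morphism of brackets
  have hanchor : ∀ α β (g : A), ρ (B α β) g = ρ α (ρ β g) - ρ β (ρ α g) := by
    refine PoissonAux.omega_induction
      (fun α => ∀ β g, ρ (B α β) g = ρ α (ρ β g) - ρ β (ρ α g)) ?_ (by simp) ?_
    · intro a u
      refine PoissonAux.omega_induction
        (fun β => ∀ g, ρ (B (a • dd u) β) g = ρ (a • dd u) (ρ β g) - ρ β (ρ (a • dd u) g))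
        ?_ (by simp) ?_
      · intro b v g
        rw [hB a b u v]
        simp only [map_add, LinearMap.add_apply, ← hdd, hρ]
        have e1 := PoissonAux.leibP₂ P halt hleib u b (P v g)
        have e2 := PoissonAux.leibP₂ P halt hleib v a (P u g)
        have e3 : P v (P g u) = -P v (P u g) := by
          rw [PoissonAux.antiP P halt g u, map_neg]
        have e4 := PoissonAux.antiP P halt (P u v) g
        have e5 := PoissonAux.antiP P halt a v
        have e6 := hjac u v g
        linear_combination (-a) * e1 + b * e2 + (a*b) * e4 + (b * P u g) * e5
          - (a*b) * e6 + (a*b) * e3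
      · intro x y hx hy g
        simp only [map_add, LinearMap.add_apply, hx, hy]
        ring
    · intro x y hx hy β g
      simp only [map_add, LinearMap.add_apply, hx β g, hy β g]
      ring
  -- Leibniz rule in the second variable
  have hBleib : ∀ α (f : A) β, B α (f • β) = f • B α β + (ρ α f) • β := by
    refine PoissonAux.omega_induction
      (fun α => ∀ (f : A) β, B α (f • β) = f • B α β + (ρ α f) • β) ?_ ?_ ?_
    · intro a u f
      refine PoissonAux.omega_induction
        (fun β => B (a • dd u) (f • β) = f • B (a • dd u) β + (ρ (a • dd u) f) • β)
        ?_ (by simp) ?_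
      · intro b v
        rw [smul_smul, hB a (f * b) u v, hB a b u v, hρ,
          PoissonAux.leibP₂ P halt hleib u f b]
        module
      · intro x y hx hy
        simp only [smul_add, map_add, hx, hy]
        module
    · intro f β; simp
    · intro x y hx hy f β
      simp only [map_add, LinearMap.add_apply, hx f β, hy f β, add_smul]
      module
  -- Leibniz rule in the first variable
  have hBleib1 : ∀ (f : A) α β, B (f • α) β = f • B α β - (ρ β f) • α := by
    intro f α β
    rw [hanti (f • α) β, hBleib β f α, hanti β α]
    module
  -- Jacobiator
  set J : KaehlerDifferential R A → KaehlerDifferential R A → KaehlerDifferential R A →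
      KaehlerDifferential R A :=
    fun α β γ => B α (B β γ) + B β (B γ α) + B γ (B α β) with hJdef
  have hJcyc : ∀ α β γ, J α β γ = J γ α β := by
    intro α β γ
    simp only [hJdef]
    abel
  have hJs : ∀ α β (c : A) γ, J α β (c • γ) = c • J α β γ := by
    intro α β c γ
    simp only [hJdef]
    rw [hBleib β c γ, map_add, hBleib α c (B β γ), hBleib α (ρ β c) γ,
      hBleib1 c γ α, map_sub, hBleib β c (B γ α), hBleib β (ρ α c) γ,
      hBleib1 c γ (B α β), hanchor α β c]
    linear_combination (norm := module) (ρ β c) • hanti α γ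
  have hone : ∀ u v : A, B (dd u) (dd v) = dd (P u v) := by
    intro u v
    have := hB 1 1 u v
    rw [one_smul, one_smul] at this
    rw [this, PoissonAux.P_one P halt hleib, PoissonAux.oneP P hleib]
    simp
  have hJgen : ∀ u v w : A, J (dd u) (dd v) (dd w) = 0 := by
    intro u v w
    simp only [hJdef]
    rw [hone v w, hone u (P v w), hone w u, hone v (P w u), hone u v, hone w (P u v),
      ← map_add, ← map_add, hjac u v w, map_zero]
  have hJzero₂ : ∀ α γ, J α 0 γ = 0 := by intro α γ; simp [hJdef]
  have hJgen3 : ∀ (a u b v c w : A), J (a • dd u) (b • dd v) (c • dd w) = 0 := by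
    intro a u b v c w
    calc J (a • dd u) (b • dd v) (c • dd w)
        = c • J (a • dd u) (b • dd v) (dd w) := hJs _ _ _ _
      _ = c • J (dd w) (a • dd u) (b • dd v) := by rw [hJcyc (a • dd u) (b • dd v) (dd w)]
      _ = c • (b • J (dd w) (a • dd u) (dd v)) := by rw [hJs]
      _ = c • (b • J (dd v) (dd w) (a • dd u)) := by rw [hJcyc (dd w) (a • dd u) (dd v)]
      _ = c • (b • (a • J (dd v) (dd w) (dd u))) := by rw [hJs]
      _ = 0 := by rw [hJgen v w u, smul_zero, smul_zero, smul_zero]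
  have hjacB : ∀ α β γ, J α β γ = 0 := by
    refine PoissonAux.omega_induction (fun α => ∀ β γ, J α β γ = 0) ?_ ?_ ?_
    · intro a u
      refine PoissonAux.omega_induction (fun β => ∀ γ, J (a • dd u) β γ = 0) ?_ ?_ ?_
      · intro b v
        refine PoissonAux.omega_induction (fun γ => J (a • dd u) (b • dd v) γ = 0)
          (fun c w => hJgen3 a u b v c w) (by simp [hJdef]) ?_
        intro x y hx hy
        have : J (a • dd u) (b • dd v) (x + y)
            = J (a • dd u) (b • dd v) x + J (a • dd u) (b • dd v) y := by
          simp only [hJdef, map_add, LinearMap.add_apply]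
          abel
        rw [this, hx, hy, add_zero]
      · intro γ; simp [hJdef]
      · intro x y hx hy γ
        have : J (a • dd u) (x + y) γ = J (a • dd u) x γ + J (a • dd u) y γ := by
          simp only [hJdef, map_add, LinearMap.add_apply]
          abel
        rw [this, hx γ, hy γ, add_zero]
    · intro β γ; simp [hJdef]
    · intro x y hx hy β γ
      have : J (x + y) β γ = J x β γ + J y β γ := by
        simp only [hJdef, map_add, LinearMap.add_apply]
        abel
      rw [this, hx β γ, hy β γ, add_zero]
  exact ⟨haltB, fun α β γ => hjacB α β γ, hone⟩
end

section
/- Let R be a commutative ring, A a commutative R-algebra, {·,·} a Poisson structure on A, π the Poisson 2-form on Ω[A⁄R], and [·,·] the Poisson–Rinehart bracket on Ω[A⁄R]. Then: (a) for every α ∈ Ω[A⁄R] the map α^♯ : A → A, c ↦ π(α, D c), is an R-derivation of A; (b) [α, a•β] = a•[α,β] + π(α, D a)•β for all α,β ∈ Ω[A⁄R] and a ∈ A; (c) the anchor is a morphism of Lie algebras: π([α,β], D c) = π(α, D(π(β, D c))) − π(β, D(π(α, D c))) for all α,β ∈ Ω[A⁄R] and c ∈ A. Hence Ω[A⁄R]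 with this bracket, its A-module structure and the anchor ♯ is an (R,A)-Lie algebra and ♯ is a morphism into the derivations of A. (Theorem 3.8, second part.) -/
/-- **Theorem 3.8, second part.**
With `π` the Poisson 2-form and `B` the Poisson–Rinehart bracket on the Kähler
differentials of a Poisson algebra `(A, P)`:
(a) for every `α` the map `c ↦ π α (D c)` is an `R`-derivation of `A`;
(b) `[α, a•β] = a•[α,β] + π(α, D a)•β`;
(c) the anchor is a morphism of Lie algebras:
`π([α,β], D c) = π(α, D(π(β, D c))) − π(β, D(π(α, D c)))`.
Hence `Ω[A⁄R]` becomes an `(R,A)`-Lie algebra with anchor `♯`. -/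
theorem poisson_rinehart_lie_rinehart_structure
    (R A : Type*) [CommRing R] [CommRing A] [Algebra R A]
    (P : A →ₗ[R] A →ₗ[R] A)
    (halt : ∀ a : A, P a a = 0)
    (hjac : ∀ a b c : A, P a (P b c) + P b (P c a) + P c (P a b) = 0)
    (hleib : ∀ a b c : A, P (a * b) c = a * P b c + P a c * b)
    (π : KaehlerDifferential R A →ₗ[A] KaehlerDifferential R A →ₗ[A] A)
    (hπalt : ∀ α, π α α = 0)
    (hπD : ∀ u v : A,
      π (KaehlerDifferential.D R A u) (KaehlerDifferential.D R A v) = P u v)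
    (B : KaehlerDifferential R A →ₗ[R] KaehlerDifferential R A →ₗ[R]
        KaehlerDifferential R A)
    (hB : ∀ a b u v : A,
      B (a • KaehlerDifferential.D R A u) (b • KaehlerDifferential.D R A v)
        = (a * P u b) • KaehlerDifferential.D R A v
          + (b * P a v) • KaehlerDifferential.D R A u
          + (a * b) • KaehlerDifferential.D R A (P u v)) :
    (∀ α : KaehlerDifferential R A, ∃ d : Derivation R A A,
        ∀ c : A, d c = π α (KaehlerDifferential.D R A c)) ∧
    (∀ (α β : KaehlerDifferential R A) (a : A),
        B α (a • β) = a • B α β + (π α (KaehlerDifferential.D R A a)) • β) ∧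
    (∀ (α β : KaehlerDifferential R A) (c : A),
        π (B α β) (KaehlerDifferential.D R A c)
          = π α (KaehlerDifferential.D R A (π β (KaehlerDifferential.D R A c)))
            - π β (KaehlerDifferential.D R A
                (π α (KaehlerDifferential.D R A c)))) := by
  set D := KaehlerDifferential.D R A with hD
  -- skew-symmetry of P
  have hskew : ∀ a b : A, P a b = - P b a := by
    intro a b
    have h := halt (a + b)
    simp only [map_add, LinearMap.add_apply, halt a, halt b] at h
    linear_combination h
  -- Leibniz in the second variable
  have hleib2 : ∀ a b c : A, P a (b * c) = b * P a c + P a b * c := by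
    intro a b c
    rw [hskew a (b * c), hleib, hskew b a, hskew c a]; ring
  -- an induction principle for Kähler differentials
  have hind : ∀ p : KaehlerDifferential R A → Prop,
      (∀ (a u : A), p (a • D u)) → p 0 →
      (∀ x y, p x → p y → p (x + y)) →
      (∀ (r : R) x, p x → p (r • x)) → ∀ x, p x := by
    intro p hgen h0 hadd hsmul x
    set S : Set (KaehlerDifferential R A) := {x | ∃ a u : A, a • D u = x} with hS
    have hsub : ∀ y ∈ Submodule.span R S, ∀ c : A, c • y ∈ Submodule.span R S := by
      intro y hy c
      induction hy using Submodule.span_induction with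
      | mem z hz => obtain ⟨a, u, rfl⟩ := hz
                    exact Submodule.subset_span ⟨c * a, u, (smul_smul c a _).symm⟩
      | zero => simpa using Submodule.zero_mem _
      | add z w _ _ hz hw => rw [smul_add]; exact Submodule.add_mem _ hz hw
      | smul r z _ hz => rw [smul_comm]; exact Submodule.smul_mem _ r hz
    have htop : x ∈ Submodule.span R S := by
      have hx : x ∈ Submodule.span A (Set.range D) := by
        rw [KaehlerDifferential.span_range_derivation]; trivial
      induction hx using Submodule.span_induction with
      | mem z hz => obtain ⟨u, rfl⟩ := hz
                    exact Submodule.subset_span ⟨1, u, one_smul _ _⟩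
      | zero => exact Submodule.zero_mem _
      | add z w _ _ hz hw => exact Submodule.add_mem _ hz hw
      | smul c z _ hz => exact hsub z hz c
    induction htop using Submodule.span_induction with
    | mem z hz => obtain ⟨a, u, rfl⟩ := hz; exact hgen a u
    | zero => exact h0
    | add z w _ _ hz hw => exact hadd z w hz hw
    | smul r z _ hz => exact hsmul r z hz
  -- the pairing of a form with D a
  have hπs : ∀ (x u a : A), π (x • D u) (D a) = x * P u a := by
    intro x u a
    rw [map_smul, LinearMap.smul_apply, hπD, smul_eq_mul]
  -- part (b)
  have partb : ∀ (α β : KaehlerDifferential R A) (a : A),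
      B α (a • β) = a • B α β + (π α (D a)) • β := by
    have step1 : ∀ (x u : A) (β : KaehlerDifferential R A) (a : A),
        B (x • D u) (a • β) = a • B (x • D u) β + (x * P u a) • β := by
      intro x u
      refine hind (fun β => ∀ a : A,
        B (x • D u) (a • β) = a • B (x • D u) β + (x * P u a) • β) ?_ ?_ ?_ ?_
      · intro y v a
        rw [smul_smul, hB, hB, hleib2]
        module
      · intro a; simp
      · intro z w hz hw a
        rw [smul_add, map_add, hz, hw, map_add, smul_add, smul_add]
        module
      · intro r z hz a
        rw [smul_comm a r, (B (x • D u)).map_smul r (a • z), hz a,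
          (B (x • D u)).map_smul r z]
        module
    refine hind (fun α => ∀ (β : KaehlerDifferential R A) (a : A),
        B α (a • β) = a • B α β + (π α (D a)) • β) ?_ ?_ ?_ ?_
    · intro x u β a; rw [step1, hπs]
    · intro β a; simp
    · intro z w hz hw β a
      simp only [map_add, LinearMap.add_apply, hz, hw, smul_add, add_smul]
      abel
    · intro r z hz β a
      simp only [map_smul, LinearMap.smul_apply, LinearMap.map_smul_of_tower]
      rw [hz β a, smul_add, Algebra.smul_def r (π z (D a))]
      module
  -- part (c)
  have partc : ∀ (α β : KaehlerDifferential R A) (c : A),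
      π (B α β) (D c) = π α (D (π β (D c))) - π β (D (π α (D c))) := by
    have step1 : ∀ (x u : A) (β : KaehlerDifferential R A) (c : A),
        π (B (x • D u) β) (D c)
          = π (x • D u) (D (π β (D c))) - π β (D (π (x • D u) (D c))) := by
      intro x u
      refine hind (fun β => ∀ c : A, π (B (x • D u) β) (D c)
          = π (x • D u) (D (π β (D c))) - π β (D (π (x • D u) (D c)))) ?_ ?_ ?_ ?_
      · intro y v c
        simp only [hB, map_add, LinearMap.add_apply, hπs]
        rw [hleib2, hleib2]
        have hj : P (P u v) c = P u (P v c) - P v (P u c) := by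
          have h1 := hjac u v c
          rw [hskew c u, map_neg, hskew c (P u v)] at h1
          linear_combination -h1
        rw [hj, hskew x v]
        ring
      · intro c; simp
      · intro z w hz hw c
        simp only [map_add, LinearMap.add_apply, hz c, hw c]
        ring
      · intro r z hz c
        simp only [map_smul, LinearMap.map_smul_of_tower, LinearMap.smul_apply,
          Derivation.map_smul, hz c, smul_sub, smul_comm r x]
    refine hind (fun α => ∀ (β : KaehlerDifferential R A) (c : A),
        π (B α β) (D c) = π α (D (π β (D c))) - π β (D (π α (D c)))) ?_ ?_ ?_ ?_
    · intro x u; exact step1 x u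
    · intro β c; simp
    · intro z w hz hw β c
      simp only [map_add, LinearMap.add_apply, hz β c, hw β c]
      ring
    · intro r z hz β c
      simp only [map_smul, LinearMap.map_smul_of_tower, LinearMap.smul_apply,
        Derivation.map_smul, hz β c, smul_sub]
  refine ⟨?_, partb, partc⟩
  intro α
  exact ⟨(π α).compDer D, fun c => rfl⟩
end

section
/- Let R be a commutative ring, let (A,{·,·}) and (A',{·,·}') be Poisson algebras over R, and let φ : A → A' be an R-algebra homomorphism with φ({a,b}) = {φ(a), φ(b)}' for all a,b ∈ A. Let φ_* : Ω[A⁄R] → Ω[A'⁄R] be the induced map on Kähler differentials (Mathlib's KaehlerDifferential.map, determined by φ_*(a•D b) = φ(a)•D(φ(b))). Then φ_* is a morphism of Lie algebras over R for the Poisson–Rinehart brackets, φ_*([α,β]) = [φ_*(α), φ_*(β)]' for all α,β ∈ Ω[A⁄R], and the Poisson 2-forms are compatible with the anchors: φ(π(α, D a)) = π'(φ_*(α), D(φ(a))) for all α ∈ Ω[A⁄R] and a ∈ A. (Addendum 3.8.4.) -/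
/-- **Addendum 3.8.4.**
Let `φ = algebraMap A A'` be an `R`-algebra homomorphism between Poisson
algebras `(A, P)` and `(A', P')` preserving the Poisson brackets.  Then the
induced map `φ_* = KaehlerDifferential.map R R A A'` on Kähler differentials is
a morphism of Lie algebras over `R` for the Poisson–Rinehart brackets, and the
Poisson 2-forms are compatible with the anchors:
`φ (π α (D a)) = π' (φ_* α) (D (φ a))`. -/
theorem poisson_rinehart_functoriality
    (R A A' : Type*) [CommRing R] [CommRing A] [Algebra R A]
    [CommRing A'] [Algebra R A'] [Algebra A A'] [IsScalarTower R A A']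
    (P : A →ₗ[R] A →ₗ[R] A)
    (halt : ∀ a : A, P a a = 0)
    (hjac : ∀ a b c : A, P a (P b c) + P b (P c a) + P c (P a b) = 0)
    (hleib : ∀ a b c : A, P (a * b) c = a * P b c + P a c * b)
    (P' : A' →ₗ[R] A' →ₗ[R] A')
    (halt' : ∀ a : A', P' a a = 0)
    (hjac' : ∀ a b c : A', P' a (P' b c) + P' b (P' c a) + P' c (P' a b) = 0)
    (hleib' : ∀ a b c : A', P' (a * b) c = a * P' b c + P' a c * b)
    (hφ : ∀ a b : A,
      algebraMap A A' (P a b) = P' (algebraMap A A' a) (algebraMap A A' b))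
    (π : KaehlerDifferential R A →ₗ[A] KaehlerDifferential R A →ₗ[A] A)
    (hπalt : ∀ α, π α α = 0)
    (hπD : ∀ u v : A,
      π (KaehlerDifferential.D R A u) (KaehlerDifferential.D R A v) = P u v)
    (π' : KaehlerDifferential R A' →ₗ[A'] KaehlerDifferential R A' →ₗ[A'] A')
    (hπalt' : ∀ α, π' α α = 0)
    (hπD' : ∀ u v : A',
      π' (KaehlerDifferential.D R A' u) (KaehlerDifferential.D R A' v) = P' u v)
    (B : KaehlerDifferential R A →ₗ[R] KaehlerDifferential R A →ₗ[R]
        KaehlerDifferential R A)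
    (hB : ∀ a b u v : A,
      B (a • KaehlerDifferential.D R A u) (b • KaehlerDifferential.D R A v)
        = (a * P u b) • KaehlerDifferential.D R A v
          + (b * P a v) • KaehlerDifferential.D R A u
          + (a * b) • KaehlerDifferential.D R A (P u v))
    (B' : KaehlerDifferential R A' →ₗ[R] KaehlerDifferential R A' →ₗ[R]
        KaehlerDifferential R A')
    (hB' : ∀ a b u v : A',
      B' (a • KaehlerDifferential.D R A' u) (b • KaehlerDifferential.D R A' v)
        = (a * P' u b) • KaehlerDifferential.D R A' v
          + (b * P' a v) • KaehlerDifferential.D R A' u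
          + (a * b) • KaehlerDifferential.D R A' (P' u v)) :
    (∀ α β : KaehlerDifferential R A,
      KaehlerDifferential.map R R A A' (B α β)
        = B' (KaehlerDifferential.map R R A A' α)
            (KaehlerDifferential.map R R A A' β)) ∧
    (∀ (α : KaehlerDifferential R A) (a : A),
      algebraMap A A' (π α (KaehlerDifferential.D R A a))
        = π' (KaehlerDifferential.map R R A A' α)
            (KaehlerDifferential.D R A' (algebraMap A A' a))) := by
  set D := KaehlerDifferential.D R A with hD
  set D' := KaehlerDifferential.D R A' with hD'
  set f := KaehlerDifferential.map R R A A' with hfdef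
  set φ := algebraMap A A' with hφdef
  have hf : ∀ (a : A) (u : A), f (a • D u) = φ a • D' (φ u) := by
    intro a u
    rw [map_smul, KaehlerDifferential.map_D, algebraMap_smul]
  have hφsmul : ∀ (r : R) (x : A), φ (r • x) = r • φ x := by
    intro r x
    rw [Algebra.smul_def, map_mul, ← IsScalarTower.algebraMap_apply, ← Algebra.smul_def]
  -- the set of simple tensors spans over R
  set S : Set (KaehlerDifferential R A) := {x | ∃ a u : A, x = a • D u} with hS
  have hmemS : ∀ a u : A, (a • D u) ∈ S := fun a u => ⟨a, u, rfl⟩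
  have hsmul_span : ∀ (a : A) (x : KaehlerDifferential R A),
      x ∈ Submodule.span R S → a • x ∈ Submodule.span R S := by
    intro a x hx
    induction hx using Submodule.span_induction with
    | mem y hy =>
      obtain ⟨b, u, rfl⟩ := hy
      rw [smul_smul]
      exact Submodule.subset_span (hmemS _ _)
    | zero => rw [smul_zero]; exact Submodule.zero_mem _
    | add y z _ _ hy hz => rw [smul_add]; exact Submodule.add_mem _ hy hz
    | smul r y _ hy => rw [smul_comm]; exact Submodule.smul_mem _ r hy
  have hspan : ∀ x : KaehlerDifferential R A, x ∈ Submodule.span R S := by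
    intro x
    have hx : x ∈ Submodule.span A (Set.range (D)) := by
      rw [hD, KaehlerDifferential.span_range_derivation]; trivial
    induction hx using Submodule.span_induction with
    | mem y hy =>
      obtain ⟨u, rfl⟩ := hy
      have : (1 : A) • D u ∈ Submodule.span R S := Submodule.subset_span (hmemS 1 u)
      rwa [one_smul] at this
    | zero => exact Submodule.zero_mem _
    | add y z _ _ hy hz => exact Submodule.add_mem _ hy hz
    | smul a y _ hy => exact hsmul_span a y hy
  constructor
  · -- first part
    have key : ∀ α ∈ Submodule.span R S, ∀ β ∈ Submodule.span R S,
        f (B α β) = B' (f α) (f β) := by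
      intro α hα
      induction hα using Submodule.span_induction with
      | mem x hx =>
        obtain ⟨a, u, rfl⟩ := hx
        intro β hβ
        induction hβ using Submodule.span_induction with
        | mem y hy =>
          obtain ⟨b, v, rfl⟩ := hy
          rw [hB, hf, hf, hB', map_add, map_add, hf, hf, hf,
            map_mul, map_mul, map_mul, hφ, hφ, hφ]
        | zero => simp
        | add y z _ _ hy hz => simp only [map_add, hy, hz]
        | smul r y _ hy =>
          simp only [map_smul, LinearMap.map_smul_of_tower, LinearMap.smul_apply, hy]
      | zero => intro β _; simp
      | add x y _ _ hx hy =>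
        intro β hβ
        simp only [map_add, LinearMap.add_apply, hx β hβ, hy β hβ]
      | smul r x _ hx =>
        intro β hβ
        simp only [map_smul, LinearMap.map_smul_of_tower, LinearMap.smul_apply, hx β hβ]
    intro α β
    exact key α (hspan α) β (hspan β)
  · -- second part
    intro α a
    induction hspan α using Submodule.span_induction with
    | mem x hx =>
      obtain ⟨b, u, rfl⟩ := hx
      rw [map_smul, LinearMap.smul_apply, smul_eq_mul, map_mul, hπD, hφ, hf,
        map_smul, LinearMap.smul_apply, smul_eq_mul, hπD']
    | zero => simp
    | add x y _ _ hx hy => simp only [map_add, LinearMap.add_apply, hx, hy]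
    | smul r x _ hx =>
      rw [LinearMap.map_smul_of_tower, LinearMap.smul_apply, hφsmul, hx]
      simp only [LinearMap.map_smul_of_tower, LinearMap.smul_apply]
end

section
/- Let R be a commutative ring, A a commutative R-algebra, {·,·} a Poisson structure on A, π the Poisson 2-form on Ω[A⁄R], and [·,·] the Poisson–Rinehart bracket on Ω[A⁄R]. Then π is a 2-cocycle in the Chevalley–Eilenberg complex of A-multilinear alternating forms on Ω[A⁄R]: for all α,β,γ ∈ Ω[A⁄R], π(α, D(π(β,γ))) − π(β, D(π(α,γ))) + π(γ, D(π(α,β))) − π([α,β], γ) + π([α,γ], β) − π([β,γ], α) = 0. (Lemma 3.9.) -/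
/-- **Lemma 3.9.**
The Poisson 2-form `π` of a Poisson algebra `(A, P)` is a 2-cocycle in the
Chevalley–Eilenberg complex of `A`-multilinear alternating forms on the Kähler
differentials, with respect to the Poisson–Rinehart bracket `B`:
`π(α, D(π(β,γ))) − π(β, D(π(α,γ))) + π(γ, D(π(α,β)))
  − π([α,β], γ) + π([α,γ], β) − π([β,γ], α) = 0`. -/
theorem poisson_two_form_is_two_cocycle
    (R A : Type*) [CommRing R] [CommRing A] [Algebra R A]
    (P : A →ₗ[R] A →ₗ[R] A)
    (halt : ∀ a : A, P a a = 0)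
    (hjac : ∀ a b c : A, P a (P b c) + P b (P c a) + P c (P a b) = 0)
    (hleib : ∀ a b c : A, P (a * b) c = a * P b c + P a c * b)
    (π : KaehlerDifferential R A →ₗ[A] KaehlerDifferential R A →ₗ[A] A)
    (hπalt : ∀ α, π α α = 0)
    (hπD : ∀ u v : A,
      π (KaehlerDifferential.D R A u) (KaehlerDifferential.D R A v) = P u v)
    (B : KaehlerDifferential R A →ₗ[R] KaehlerDifferential R A →ₗ[R]
        KaehlerDifferential R A)
    (hB : ∀ a b u v : A,
      B (a • KaehlerDifferential.D R A u) (b • KaehlerDifferential.D R A v)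
        = (a * P u b) • KaehlerDifferential.D R A v
          + (b * P a v) • KaehlerDifferential.D R A u
          + (a * b) • KaehlerDifferential.D R A (P u v)) :
    ∀ α β γ : KaehlerDifferential R A,
      π α (KaehlerDifferential.D R A (π β γ))
        - π β (KaehlerDifferential.D R A (π α γ))
        + π γ (KaehlerDifferential.D R A (π α β))
        - π (B α β) γ + π (B α γ) β - π (B β γ) α = 0 := by
  set D := KaehlerDifferential.D R A with hD
  have hskew : ∀ x y : A, P x y = - P y x := by
    intro x y
    have h := halt (x + y)
    simp only [map_add, LinearMap.add_apply, halt] at h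
    linear_combination h
  have hsk2 : ∀ x y z : A, P x (P y z) = - P x (P z y) := by
    intro x y z; rw [hskew y z, map_neg]
  have hleib2 : ∀ x y z : A, P x (y * z) = y * P x z + P x y * z := by
    intro x y z
    rw [hskew x (y * z), hleib, hskew y x, hskew z x]; ring
  have key : ∀ a u b v c w : A,
      π (a • D u) (D (π (b • D v) (c • D w)))
        - π (b • D v) (D (π (a • D u) (c • D w)))
        + π (c • D w) (D (π (a • D u) (b • D v)))
        - π (B (a • D u) (b • D v)) (c • D w)
        + π (B (a • D u) (c • D w)) (b • D v)
        - π (B (b • D v) (c • D w)) (a • D u) = 0 := by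
    intro a u b v c w
    simp only [hB, map_add, map_smul, LinearMap.add_apply, LinearMap.smul_apply,
      smul_eq_mul, hπD, hleib2]
    linear_combination
      2*a*b*c * hjac u v w
      - 2*a*b*c * hsk2 v u w
      - a*b*c * hskew (P u v) w
      + a*b*c * hskew (P u w) v
      - a*b*c * hskew (P v w) u
      + a*b*(P u c) * hskew v w
      - a*b*(P v c) * hskew u w
      + a*c*(P w b) * hskew u v
      - a*c*(P v u) * hskew b w
      - b*c*(P u w) * hskew v a
      + b*c*(P u v) * hskew w a
  -- span setup
  set s : Set (KaehlerDifferential R A) := {x | ∃ a u : A, x = a • D u} with hs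
  have hsmul : ∀ (r : A) (x), x ∈ Submodule.span R s → r • x ∈ Submodule.span R s := by
    intro r x hx
    induction hx using Submodule.span_induction with
    | mem x hx =>
      obtain ⟨a, u, rfl⟩ := hx
      exact Submodule.subset_span ⟨r * a, u, (mul_smul r a (D u)).symm⟩
    | zero => simp
    | add x y hx hy ihx ihy => rw [smul_add]; exact Submodule.add_mem _ ihx ihy
    | smul t x hx ihx => rw [smul_comm]; exact Submodule.smul_mem _ t ihx
  have hstop : ∀ x : KaehlerDifferential R A, x ∈ Submodule.span R s := by
    intro x
    have hx : x ∈ Submodule.span A (Set.range (KaehlerDifferential.D R A)) := by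
      rw [KaehlerDifferential.span_range_derivation]; trivial
    induction hx using Submodule.span_induction with
    | mem x hxx =>
      obtain ⟨u, rfl⟩ := hxx
      exact Submodule.subset_span ⟨1, u, (one_smul A (D u)).symm⟩
    | zero => simp
    | add x y hx hy ihx ihy => exact Submodule.add_mem _ ihx ihy
    | smul a x hx ihx => exact hsmul a x ihx
  intro α β γ
  have hα := hstop α
  have hβ := hstop β
  have hγ := hstop γ
  clear_value D
  induction hα using Submodule.span_induction with
  | mem α hm =>
    induction hβ using Submodule.span_induction with
    | mem β hm2 =>
      induction hγ using Submodule.span_induction with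
      | mem γ hm3 =>
        obtain ⟨a, u, rfl⟩ := hm
        obtain ⟨b, v, rfl⟩ := hm2
        obtain ⟨c, w, rfl⟩ := hm3
        exact key a u b v c w
      | zero => simp
      | add x y hx hy ihx ihy =>
        simp only [map_add, LinearMap.add_apply] at ihx ihy ⊢
        linear_combination ihx + ihy
      | smul r x hx ihx =>
        simp only [map_smul, LinearMap.smul_apply, Derivation.map_smul,
          LinearMap.map_smul_of_tower]
        simp only [Algebra.smul_def]
        linear_combination (algebraMap R A r) * ihx
    | zero => simp
    | add x y hx hy ihx ihy =>
      simp only [map_add, LinearMap.add_apply] at ihx ihy ⊢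
      linear_combination ihx + ihy
    | smul r x hx ihx =>
      simp only [map_smul, LinearMap.smul_apply, Derivation.map_smul,
        LinearMap.map_smul_of_tower]
      simp only [Algebra.smul_def]
      linear_combination (algebraMap R A r) * ihx
  | zero => simp
  | add x y hx hy ihx ihy =>
    simp only [map_add, LinearMap.add_apply] at ihx ihy ⊢
    linear_combination ihx + ihy
  | smul r x hx ihx =>
    simp only [map_smul, LinearMap.smul_apply, Derivation.map_smul,
      LinearMap.map_smul_of_tower]
    simp only [Algebra.smul_def]
    linear_combination (algebraMap R A r) * ihx
end

section
/- Let R be a commutative ring, A a commutative R-algebra, and π an A-bilinear alternating 2-form on Ω[A⁄R]; define {a,b} := π(D a, D b) for a,b ∈ A. Suppose there is an R-bilinear bracket [·,·] on Ω[A⁄R] satisfying [a•Du, b•Dv] = a{u,b}•Dv + b{a,v}•Du + (ab)•D{u,v}, which is alternating, satisfies the Jacobi identity, satisfies [α, a•β] = a•[α,β] + π(α, D a)•β, and whose anchor is a Lie algebra morphism, i.e. π([α,β], D c) = π(α, D(π(β, D c))) − π(β, D(π(α, D c))) for all α,β ∈ Ω[A⁄R], a,c ∈ A. Then the bracket {·,·}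 on A — which is automatically alternating and satisfies the Leibniz rule {ab,c} = a{b,c} + {a,c}b — satisfies the Jacobi identity, and hence is a Poisson structure on A, if and only if π is a 2-cocycle, i.e. π(α, D(π(β,γ))) − π(β, D(π(α,γ))) + π(γ, D(π(α,β))) − π([α,β], γ) + π([α,γ], β) − π([β,γ], α) = 0 for all α,β,γ ∈ Ω[A⁄R]. (Theorem 3.11.) -/
local notation "𝒹" => KaehlerDifferential.D

private noncomputable def Cexp {R A : Type*} [CommRing R] [CommRing A] [Algebra R A]
    (π : KaehlerDifferential R A →ₗ[A] KaehlerDifferential R A →ₗ[A] A)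
    (B : KaehlerDifferential R A →ₗ[R] KaehlerDifferential R A →ₗ[R]
        KaehlerDifferential R A)
    (α β γ : KaehlerDifferential R A) : A :=
  π α (𝒹 R A (π β γ)) - π β (𝒹 R A (π α γ)) + π γ (𝒹 R A (π α β))
    - π (B α β) γ + π (B α γ) β - π (B β γ) α



/-- **Theorem 3.11.**
Let `π` be an `A`-bilinear alternating 2-form on the Kähler differentials and
`{a,b} := π (D a) (D b)`.  Suppose `B` is an `R`-bilinear bracket on `Ω[A⁄R]`
satisfying the defining formula of the Poisson–Rinehart bracket, which is
alternating, satisfies the Jacobi identity, satisfies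
`[α, a•β] = a•[α,β] + π(α, D a)•β`, and whose anchor is a Lie algebra morphism.
Then `{·,·}` is automatically alternating and satisfies the Leibniz rule, and it
satisfies the Jacobi identity (hence is a Poisson structure on `A`) if and only
if `π` is a 2-cocycle. -/
theorem poisson_structure_iff_two_cocycle
    (R A : Type*) [CommRing R] [CommRing A] [Algebra R A]
    (π : KaehlerDifferential R A →ₗ[A] KaehlerDifferential R A →ₗ[A] A)
    (hπalt : ∀ α, π α α = 0)
    (B : KaehlerDifferential R A →ₗ[R] KaehlerDifferential R A →ₗ[R]
        KaehlerDifferential R A)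
    (hB : ∀ a b u v : A,
      B (a • KaehlerDifferential.D R A u) (b • KaehlerDifferential.D R A v)
        = (a * π (KaehlerDifferential.D R A u) (KaehlerDifferential.D R A b))
              • KaehlerDifferential.D R A v
          + (b * π (KaehlerDifferential.D R A a) (KaehlerDifferential.D R A v))
              • KaehlerDifferential.D R A u
          + (a * b) • KaehlerDifferential.D R A
              (π (KaehlerDifferential.D R A u) (KaehlerDifferential.D R A v)))
    (hBalt : ∀ α, B α α = 0)
    (hBjac : ∀ α β γ, B α (B β γ) + B β (B γ α) + B γ (B α β) = 0)
    (hBleib : ∀ (α : KaehlerDifferential R A) (a : A)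
        (β : KaehlerDifferential R A),
      B α (a • β) = a • B α β + (π α (KaehlerDifferential.D R A a)) • β)
    (hanch : ∀ (α β : KaehlerDifferential R A) (c : A),
      π (B α β) (KaehlerDifferential.D R A c)
        = π α (KaehlerDifferential.D R A (π β (KaehlerDifferential.D R A c)))
          - π β (KaehlerDifferential.D R A
              (π α (KaehlerDifferential.D R A c)))) :
    (∀ a : A, π (KaehlerDifferential.D R A a) (KaehlerDifferential.D R A a) = 0) ∧
    (∀ a b c : A,
      π (KaehlerDifferential.D R A (a * b)) (KaehlerDifferential.D R A c)
        = a * π (KaehlerDifferential.D R A b) (KaehlerDifferential.D R A c)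
          + π (KaehlerDifferential.D R A a) (KaehlerDifferential.D R A c) * b) ∧
    ((∀ a b c : A,
        π (KaehlerDifferential.D R A a)
            (KaehlerDifferential.D R A
              (π (KaehlerDifferential.D R A b) (KaehlerDifferential.D R A c)))
          + π (KaehlerDifferential.D R A b)
              (KaehlerDifferential.D R A
                (π (KaehlerDifferential.D R A c) (KaehlerDifferential.D R A a)))
          + π (KaehlerDifferential.D R A c)
              (KaehlerDifferential.D R A
                (π (KaehlerDifferential.D R A a) (KaehlerDifferential.D R A b)))
          = 0) ↔
      (∀ α β γ : KaehlerDifferential R A,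
        π α (KaehlerDifferential.D R A (π β γ))
          - π β (KaehlerDifferential.D R A (π α γ))
          + π γ (KaehlerDifferential.D R A (π α β))
          - π (B α β) γ + π (B α γ) β - π (B β γ) α = 0)) := by
  have πskew : ∀ α β : KaehlerDifferential R A, π α β = - π β α := by
    intro α β
    have h := hπalt (α + β)
    simp only [map_add, LinearMap.add_apply, hπalt α, hπalt β, zero_add, add_zero] at h
    linear_combination h
  have Bskew : ∀ α β : KaehlerDifferential R A, B α β = - B β α := by
    intro α β
    have h := hBalt (α + β)
    simp only [map_add, LinearMap.add_apply, hBalt α, hBalt β, zero_add, add_zero] at h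
    exact eq_neg_of_add_eq_zero_right h
  have hBsmul : ∀ (a : A) (α β : KaehlerDifferential R A),
      B (a • α) β = a • B α β - (π β (𝒹 R A a)) • α := by
    intro a α β
    rw [Bskew, hBleib, Bskew β α]
    module
  have hπD : ∀ (γ α β : KaehlerDifferential R A),
      π γ (𝒹 R A (π β α)) = - π γ (𝒹 R A (π α β)) := by
    intro γ α β
    rw [πskew β α, map_neg, map_neg]
  have hπB : ∀ (α β γ : KaehlerDifferential R A),
      π (B β α) γ = - π (B α β) γ := by
    intro α β γ
    rw [Bskew β α, map_neg, LinearMap.neg_apply]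
  have Cswap12 : ∀ α β γ, Cexp π B β α γ = - Cexp π B α β γ := by
    intro α β γ
    simp only [Cexp]
    linear_combination hπD γ α β - hπB α β γ
  have Cswap23 : ∀ α β γ, Cexp π B α γ β = - Cexp π B α β γ := by
    intro α β γ
    simp only [Cexp]
    linear_combination hπD α β γ - hπB β γ α
  have keyC : ∀ u v w : A,
      Cexp π B (𝒹 R A u) (𝒹 R A v) (𝒹 R A w)
        + (π (𝒹 R A u) (𝒹 R A (π (𝒹 R A v) (𝒹 R A w)))
          + π (𝒹 R A v) (𝒹 R A (π (𝒹 R A w) (𝒹 R A u)))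
          + π (𝒹 R A w) (𝒹 R A (π (𝒹 R A u) (𝒹 R A v)))) = 0 := by
    intro u v w
    simp only [Cexp]
    linear_combination (-1 : A) * hanch (𝒹 R A u) (𝒹 R A v) w
      + hanch (𝒹 R A u) (𝒹 R A w) v - hanch (𝒹 R A v) (𝒹 R A w) u
      + hπD (𝒹 R A u) (𝒹 R A v) (𝒹 R A w) + hπD (𝒹 R A w) (𝒹 R A u) (𝒹 R A v)
  have Cadd1 : ∀ α α' β γ,
      Cexp π B (α + α') β γ = Cexp π B α β γ + Cexp π B α' β γ := by
    intro α α' β γ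
    simp only [Cexp, map_add, LinearMap.add_apply]
    ring
  have Cadd2 : ∀ α β β' γ,
      Cexp π B α (β + β') γ = Cexp π B α β γ + Cexp π B α β' γ := by
    intro α β β' γ
    simp only [Cexp, map_add, LinearMap.add_apply]
    ring
  have Cadd3 : ∀ α β γ γ',
      Cexp π B α β (γ + γ') = Cexp π B α β γ + Cexp π B α β γ' := by
    intro α β γ γ'
    simp only [Cexp, map_add, LinearMap.add_apply]
    ring
  have Csmul1 : ∀ (a : A) α β γ, Cexp π B (a • α) β γ = a * Cexp π B α β γ := by
    intro a α β γ
    simp only [Cexp, hBsmul, map_smul, map_sub, map_add, LinearMap.smul_apply,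
      LinearMap.sub_apply, LinearMap.add_apply, smul_eq_mul, Derivation.leibniz]
    ring
  have Csmul2 : ∀ (a : A) α β γ, Cexp π B α (a • β) γ = a * Cexp π B α β γ := by
    intro a α β γ
    linear_combination Cswap12 (a • β) α γ - Csmul1 a β α γ - a * Cswap12 β α γ
  have Csmul3 : ∀ (a : A) α β γ, Cexp π B α β (a • γ) = a * Cexp π B α β γ := by
    intro a α β γ
    linear_combination Cswap23 α (a • γ) β - Cswap12 (a • γ) α β + Csmul1 a γ α β
      + a * Cswap12 α γ β - a * Cswap23 α β γ
  have ext : ∀ f : KaehlerDifferential R A → A,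
      (∀ x y, f (x + y) = f x + f y) →
      (∀ (a : A) x, f (a • x) = a * f x) →
      (∀ u : A, f (𝒹 R A u) = 0) → ∀ ω, f ω = 0 := by
    intro f hadd hsmul hDf ω
    have h0 : f 0 = 0 := by simpa using hsmul 0 0
    have key : ∀ x ∈ Submodule.span A (Set.range (⇑(𝒹 R A))), f x = 0 := by
      intro x hx
      induction hx using Submodule.span_induction with
      | mem x hx => obtain ⟨u, rfl⟩ := hx; exact hDf u
      | zero => exact h0
      | add x y hx hy ihx ihy => rw [hadd, ihx, ihy, add_zero]
      | smul a x hx ih => rw [hsmul, ih, mul_zero]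
    exact key ω (by rw [KaehlerDifferential.span_range_derivation]; trivial)
  refine ⟨fun a => hπalt _, ?_, ?_⟩
  · intro a b c
    rw [Derivation.leibniz]
    simp only [map_add, LinearMap.add_apply, map_smul, LinearMap.smul_apply,
      smul_eq_mul]
    ring
  · constructor
    · intro hjac α β γ
      have hex : ∀ u v w : A, Cexp π B (𝒹 R A u) (𝒹 R A v) (𝒹 R A w) = 0 := by
        intro u v w
        linear_combination keyC u v w - hjac u v w
      have h3 : ∀ (u v : A) (γ' : KaehlerDifferential R A),
          Cexp π B (𝒹 R A u) (𝒹 R A v) γ' = 0 := fun u v =>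
        ext (fun γ' => Cexp π B (𝒹 R A u) (𝒹 R A v) γ')
          (fun x y => Cadd3 (𝒹 R A u) (𝒹 R A v) x y)
          (fun a x => Csmul3 a (𝒹 R A u) (𝒹 R A v) x)
          (fun w => hex u v w)
      have h2 : ∀ (u : A) (β' γ' : KaehlerDifferential R A),
          Cexp π B (𝒹 R A u) β' γ' = 0 := by
        intro u β' γ'
        exact ext (fun x => Cexp π B (𝒹 R A u) x γ')
          (fun x y => Cadd2 (𝒹 R A u) x y γ')
          (fun a x => Csmul2 a (𝒹 R A u) x γ')
          (fun v => h3 u v γ') β'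
      have h1 : Cexp π B α β γ = 0 :=
        ext (fun x => Cexp π B x β γ) (fun x y => Cadd1 x y β γ)
          (fun a x => Csmul1 a x β γ) (fun u => h2 u β γ) α
      exact h1
    · intro hcoc a b c
      have hC : Cexp π B (𝒹 R A a) (𝒹 R A b) (𝒹 R A c) = 0 :=
        hcoc (𝒹 R A a) (𝒹 R A b) (𝒹 R A c)
      linear_combination keyC a b c - hC
end

section
/- Let R be a commutative ring, A and A' commutative R-algebras, and (L,[·,·],ρ) an (R,A)-Lie algebra. Let φ : A → A' be an R-algebra homomorphism and τ : L → Der_R(A') a morphism of Lie algebras over R such that τ(α)(φ(a)) = φ(ρ(α)(a)) and τ(a•α) = φ(a)·τ(α) (as maps A' → A') for all α ∈ L, a ∈ A. Regard A' as an A-algebra via φ and set L' := A' ⊗_A L. Then: there is a unique R-bilinear bracket on L' satisfying [u ⊗ α, v ⊗ β] = (uv) ⊗ [α,β] − (v·τ(β)(u)) ⊗ α + (u·τ(α)(v)) ⊗ β for u,v ∈ A', α,β ∈ L; this bracket is alternating and satisfies the Jacobi identity; the pairing (u ⊗ α, w) ↦ u·τ(α)(w) induces a well-defined A'-linear map ρ'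 : L' → Der_R(A') which is a morphism of Lie algebras; and [ξ, w•η] = w•[ξ,η] + ρ'(ξ)(w)•η for all ξ,η ∈ L' and w ∈ A'. Thus L' is an (R,A')-Lie algebra, and the map L → L', α ↦ 1 ⊗ α, is a morphism of Lie algebras over R. (Proposition 1.16: induced Lie–Rinehart structure.) -/
open TensorProduct
set_option linter.unusedSectionVars false
set_option maxHeartbeats 1000000

section LRAux2
variable {R : Type*} (A : Type*) {A' L : Type*} [CommRing R] [CommRing A] [Algebra R A]
  [CommRing A'] [Algebra R A'] [Algebra A A'] [IsScalarTower R A A']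
  [AddCommGroup L] [Module R L] [Module A L] [IsScalarTower R A L]

variable (B : L →ₗ[R] L →ₗ[R] L) (ρ : L →ₗ[A] Derivation R A A)
  (τ : L →ₗ[R] Derivation R A' A')

noncomputable def lrg (u : A') (α : L) (v : A') (β : L) : A' ⊗[A] L :=
  (u * v) ⊗ₜ[A] B α β - (v * τ β u) ⊗ₜ[A] α + (u * τ α v) ⊗ₜ[A] β

lemma lrg_bal_right
    (hleib : ∀ (α β : L) (a : A), B α (a • β) = a • B α β + (ρ α a) • β)
    (hτφ : ∀ (α : L) (a : A), τ α (algebraMap A A' a) = algebraMap A A' (ρ α a))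
    (hτA : ∀ (a : A) (α : L) (w : A'), τ (a • α) w = algebraMap A A' a * τ α w)
    (a : A) (u : A') (α : L) (v : A') (β : L) :
    lrg A B τ u α (a • v) β = lrg A B τ u α v (a • β) := by
  simp only [lrg, hleib, hτA, Algebra.smul_def, Derivation.leibniz, hτφ, smul_eq_mul,
    tmul_add, tmul_smul, smul_tmul', mul_add, add_tmul]
  simp only [Algebra.algebraMap_self, RingHom.id_apply]
  ring_nf
  abel

lemma lr_skew (halt : ∀ α, B α α = 0) (α β : L) : B β α = - B α β := by
  have h := halt (α + β)
  simp only [map_add, LinearMap.add_apply, halt] at h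
  have h2 : B α β + B β α = 0 := by rw [← h]; abel
  exact eq_neg_of_add_eq_zero_right h2

lemma lr_leib_left (halt : ∀ α, B α α = 0)
    (hleib : ∀ (α β : L) (a : A), B α (a • β) = a • B α β + (ρ α a) • β)
    (a : A) (α β : L) : B (a • α) β = a • B α β - (ρ β a) • α := by
  rw [lr_skew B halt β (a • α), hleib, lr_skew B halt α β]
  simp only [smul_neg]
  abel

lemma lrg_bal_left (halt : ∀ α, B α α = 0)
    (hleib : ∀ (α β : L) (a : A), B α (a • β) = a • B α β + (ρ α a) • β)
    (hτφ : ∀ (α : L) (a : A), τ α (algebraMap A A' a) = algebraMap A A' (ρ α a))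
    (hτA : ∀ (a : A) (α : L) (w : A'), τ (a • α) w = algebraMap A A' a * τ α w)
    (a : A) (u : A') (α : L) (v : A') (β : L) :
    lrg A B τ (a • u) α v β = lrg A B τ u (a • α) v β := by
  simp only [lrg, lr_leib_left A B ρ halt hleib, hτA, Algebra.smul_def, Derivation.leibniz, hτφ,
    smul_eq_mul, tmul_add, tmul_sub, tmul_smul, smul_tmul', mul_add, mul_sub, add_tmul, sub_tmul]
  simp only [Algebra.algebraMap_self, RingHom.id_apply]
  ring_nf
  abel

lemma lrg_add_v (u : A') (α : L) (v₁ v₂ : A') (β : L) :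
    lrg A B τ u α (v₁ + v₂) β = lrg A B τ u α v₁ β + lrg A B τ u α v₂ β := by
  simp only [lrg, mul_add, add_mul, map_add, add_tmul]; abel

lemma lrg_add_b (u : A') (α : L) (v : A') (β₁ β₂ : L) :
    lrg A B τ u α v (β₁ + β₂) = lrg A B τ u α v β₁ + lrg A B τ u α v β₂ := by
  simp only [lrg, map_add, LinearMap.add_apply, Derivation.add_apply, mul_add, add_tmul,
    tmul_add]; abel

lemma lrg_add_u (u₁ u₂ : A') (α : L) (v : A') (β : L) :
    lrg A B τ (u₁ + u₂) α v β = lrg A B τ u₁ α v β + lrg A B τ u₂ α v β := by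
  simp only [lrg, add_mul, mul_add, map_add, add_tmul]; abel

lemma lrg_add_a (u : A') (α₁ α₂ : L) (v : A') (β : L) :
    lrg A B τ u (α₁ + α₂) v β = lrg A B τ u α₁ v β + lrg A B τ u α₂ v β := by
  simp only [lrg, map_add, LinearMap.add_apply, Derivation.add_apply, mul_add, add_tmul,
    tmul_add]; abel

lemma lrg_smul_u (r : R) (u : A') (α : L) (v : A') (β : L) :
    lrg A B τ (r • u) α v β = r • lrg A B τ u α v β := by
  simp only [lrg, smul_mul_assoc, Derivation.map_smul, mul_smul_comm, smul_tmul', smul_sub,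
    smul_add]

lemma lrg_smul_v (r : R) (u : A') (α : L) (v : A') (β : L) :
    lrg A B τ u α (r • v) β = r • lrg A B τ u α v β := by
  simp only [lrg, smul_mul_assoc, Derivation.map_smul, mul_smul_comm, smul_tmul', smul_sub,
    smul_add]

lemma lr_addHom_ext {P : Type*} [AddCommMonoid P] {f g : A' ⊗[A] L →+ P}
    (h : ∀ (u : A') (β : L), f (u ⊗ₜ[A] β) = g (u ⊗ₜ[A] β)) : f = g := by
  refine AddMonoidHom.ext fun x => ?_
  induction x using TensorProduct.induction_on with
  | zero => simp
  | tmul u β => exact h u β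
  | add x y hx hy => simp [map_add, hx, hy]

variable (halt : ∀ α, B α α = 0)
  (hleib : ∀ (α β : L) (a : A), B α (a • β) = a • B α β + (ρ α a) • β)
  (hτφ : ∀ (α : L) (a : A), τ α (algebraMap A A' a) = algebraMap A A' (ρ α a))
  (hτA : ∀ (a : A) (α : L) (w : A'), τ (a • α) w = algebraMap A A' a * τ α w)

/-- the inner lift: for fixed `(u, α)`, the map `η ↦ [u ⊗ α, η]`. -/
noncomputable def lrInner (u : A') (α : L) : A' ⊗[A] L →+ A' ⊗[A] L :=
  TensorProduct.liftAddHom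
    (AddMonoidHom.mk' (fun v => AddMonoidHom.mk' (fun β => lrg A B τ u α v β)
        (fun β₁ β₂ => lrg_add_b A B τ u α v β₁ β₂))
      (fun v₁ v₂ => AddMonoidHom.ext fun β => lrg_add_v A B τ u α v₁ v₂ β))
    (fun a v β => lrg_bal_right A B ρ τ hleib hτφ hτA a u α v β)

@[simp] lemma lrInner_tmul (u v : A') (α β : L) :
    lrInner A B ρ τ hleib hτφ hτA u α (v ⊗ₜ[A] β) = lrg A B τ u α v β := rfl

/-- the full bracket as an `AddMonoidHom` in two variables. -/
noncomputable def lrB0 : A' ⊗[A] L →+ A' ⊗[A] L →+ A' ⊗[A] L :=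
  TensorProduct.liftAddHom
    (AddMonoidHom.mk' (fun u => AddMonoidHom.mk'
        (fun α => lrInner A B ρ τ hleib hτφ hτA u α)
        (fun α₁ α₂ => lr_addHom_ext A (fun v β => by
          simp only [AddMonoidHom.mk'_apply, lrInner_tmul, AddMonoidHom.add_apply, lrg_add_a])))
      (fun u₁ u₂ => AddMonoidHom.ext fun α => lr_addHom_ext A (fun v β => by
        simp only [AddMonoidHom.mk'_apply, AddMonoidHom.add_apply, lrInner_tmul, lrg_add_u])))
    (fun a u α => lr_addHom_ext A (fun v β => by
      simp only [lrInner_tmul, AddMonoidHom.mk'_apply]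
      exact lrg_bal_left A B ρ τ halt hleib hτφ hτA a u α v β))

@[simp] lemma lrB0_tmul (u v : A') (α β : L) :
    lrB0 A B ρ τ halt hleib hτφ hτA (u ⊗ₜ[A] α) (v ⊗ₜ[A] β) = lrg A B τ u α v β := rfl

lemma lrB0_smul_left (r : R) (ξ η : A' ⊗[A] L) :
    lrB0 A B ρ τ halt hleib hτφ hτA (r • ξ) η = r • lrB0 A B ρ τ halt hleib hτφ hτA ξ η := by
  induction ξ using TensorProduct.induction_on with
  | zero => simp
  | tmul u α =>
    rw [smul_tmul']
    induction η using TensorProduct.induction_on with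
    | zero => simp
    | tmul v β => simp [lrg_smul_u]
    | add x y hx hy => simp only [map_add, hx, hy, smul_add]
  | add x y hx hy =>
    simp only [smul_add, map_add, AddMonoidHom.add_apply, hx, hy]

lemma lrB0_smul_right (r : R) (ξ η : A' ⊗[A] L) :
    lrB0 A B ρ τ halt hleib hτφ hτA ξ (r • η) = r • lrB0 A B ρ τ halt hleib hτφ hτA ξ η := by
  induction ξ using TensorProduct.induction_on with
  | zero => simp
  | tmul u α =>
    induction η using TensorProduct.induction_on with
    | zero => simp
    | tmul v β => rw [smul_tmul']; simp [lrg_smul_v]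
    | add x y hx hy => simp only [smul_add, map_add, hx, hy]
  | add x y hx hy =>
    simp only [map_add, AddMonoidHom.add_apply, hx, hy, smul_add]

/-- the bracket as an `R`-bilinear map. -/
noncomputable def lrBracket : (A' ⊗[A] L) →ₗ[R] (A' ⊗[A] L) →ₗ[R] (A' ⊗[A] L) :=
  LinearMap.mk₂ R (fun ξ η => lrB0 A B ρ τ halt hleib hτφ hτA ξ η)
    (fun ξ₁ ξ₂ η => by simp [map_add])
    (fun r ξ η => lrB0_smul_left A B ρ τ halt hleib hτφ hτA r ξ η)
    (fun ξ η₁ η₂ => by simp [map_add])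
    (fun r ξ η => lrB0_smul_right A B ρ τ halt hleib hτφ hτA r ξ η)

lemma lrBracket_tmul (u v : A') (α β : L) :
    lrBracket A B ρ τ halt hleib hτφ hτA (u ⊗ₜ[A] α) (v ⊗ₜ[A] β)
      = (u * v) ⊗ₜ[A] B α β - (v * τ β u) ⊗ₜ[A] α + (u * τ α v) ⊗ₜ[A] β := rfl

/-- the anchor as an `AddMonoidHom`. -/
noncomputable def lrAnchor0 : A' ⊗[A] L →+ Derivation R A' A' :=
  TensorProduct.liftAddHom
    (AddMonoidHom.mk' (fun u => AddMonoidHom.mk' (fun α => u • τ α)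
        (fun α₁ α₂ => by simp [smul_add]))
      (fun u₁ u₂ => AddMonoidHom.ext fun α => add_smul u₁ u₂ (τ α)))
    (fun a u α => by
      ext w
      simp only [AddMonoidHom.mk'_apply, Derivation.smul_apply, smul_eq_mul, hτA,
        Algebra.smul_def]
      ring)

@[simp] lemma lrAnchor0_tmul (u : A') (α : L) :
    lrAnchor0 A τ hτA (u ⊗ₜ[A] α) = u • τ α := rfl

lemma lrAnchor0_smul (w : A') (ξ : A' ⊗[A] L) :
    lrAnchor0 A τ hτA (w • ξ) = w • lrAnchor0 A τ hτA ξ := by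
  induction ξ using TensorProduct.induction_on with
  | zero => simp
  | tmul u α => rw [smul_tmul']; simp [smul_eq_mul, mul_smul]
  | add x y hx hy => simp only [smul_add, map_add, hx, hy]

/-- the anchor as `A'`-linear map. -/
noncomputable def lrAnchor : (A' ⊗[A] L) →ₗ[A'] Derivation R A' A' where
  toFun := lrAnchor0 A τ hτA
  map_add' := map_add _
  map_smul' := lrAnchor0_smul A τ hτA

@[simp] lemma lrAnchor_tmul (u : A') (α : L) (w : A') :
    lrAnchor A τ hτA (u ⊗ₜ[A] α) w = u * τ α w := by
  simp [lrAnchor, Derivation.smul_apply, smul_eq_mul]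

section Props

variable (B' : (A' ⊗[A] L) →ₗ[R] (A' ⊗[A] L) →ₗ[R] (A' ⊗[A] L))
  (hB' : ∀ (u v : A') (α β : L),
      B' (u ⊗ₜ[A] α) (v ⊗ₜ[A] β)
        = (u * v) ⊗ₜ[A] B α β - (v * τ β u) ⊗ₜ[A] α + (u * τ α v) ⊗ₜ[A] β)

include hB'

include halt in
lemma lrB'_skew_aux (ξ η : A' ⊗[A] L) : B' ξ η + B' η ξ = 0 := by
  induction ξ using TensorProduct.induction_on with
  | zero => simp
  | tmul u α =>
    induction η using TensorProduct.induction_on with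
    | zero => simp
    | tmul v β =>
      rw [hB' u v α β, hB' v u β α, lr_skew B halt α β]
      simp only [tmul_neg]
      ring_nf
      abel
    | add x y hx hy =>
      have h2 : B' (u ⊗ₜ[A] α) (x + y) + B' (x + y) (u ⊗ₜ[A] α)
          = (B' (u ⊗ₜ[A] α) x + B' x (u ⊗ₜ[A] α)) + (B' (u ⊗ₜ[A] α) y + B' y (u ⊗ₜ[A] α)) := by
        simp only [map_add, LinearMap.add_apply]; abel
      rw [h2, hx, hy, add_zero]
  | add x y hx hy =>
    have h2 : B' (x + y) η + B' η (x + y) = (B' x η + B' η x) + (B' y η + B' η y) := by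
      simp only [map_add, LinearMap.add_apply]; abel
    rw [h2, hx, hy, add_zero]

include halt in
lemma lrB'_alt (ξ : A' ⊗[A] L) : B' ξ ξ = 0 := by
  induction ξ using TensorProduct.induction_on with
  | zero => simp
  | tmul u α =>
    rw [hB' u u α α, halt α]
    simp
  | add x y hx hy =>
    have h := lrB'_skew_aux A B τ halt B' hB' x y
    have h2 : B' (x + y) (x + y) = B' x x + B' y y + (B' x y + B' y x) := by
      simp only [map_add, LinearMap.add_apply]; abel
    rw [h2, hx, hy, h]; simp

lemma lrB'_anchor_lie
    (hτlie : ∀ (α β : L) (w : A'), τ (B α β) w = τ α (τ β w) - τ β (τ α w))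
    (ξ η : A' ⊗[A] L) (w : A') :
    lrAnchor A τ hτA (B' ξ η) w
      = lrAnchor A τ hτA ξ (lrAnchor A τ hτA η w)
        - lrAnchor A τ hτA η (lrAnchor A τ hτA ξ w) := by
  induction ξ using TensorProduct.induction_on with
  | zero => simp
  | tmul u α =>
    induction η using TensorProduct.induction_on with
    | zero => simp
    | tmul v β =>
      rw [hB' u v α β]
      simp only [map_add, map_sub, Derivation.add_apply, Derivation.sub_apply,
        LinearMap.map_add, LinearMap.map_sub, lrAnchor_tmul, hτlie,
        Derivation.leibniz, smul_eq_mul]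
      ring
    | add x y hx hy =>
      simp only [map_add, LinearMap.add_apply, Derivation.add_apply, hx, hy]
      ring
  | add x y hx hy =>
    simp only [map_add, LinearMap.add_apply, Derivation.add_apply, hx, hy]
    ring

lemma lrB'_leibniz (ξ η : A' ⊗[A] L) (w : A') :
    B' ξ (w • η) = w • B' ξ η + (lrAnchor A τ hτA ξ w) • η := by
  induction ξ using TensorProduct.induction_on with
  | zero => simp
  | tmul u α =>
    induction η using TensorProduct.induction_on with
    | zero => simp
    | tmul v β =>
      have hw : w • (v ⊗ₜ[A] β) = (w * v) ⊗ₜ[A] β := by rw [smul_tmul', smul_eq_mul]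
      rw [hw, hB' u (w * v) α β, hB' u v α β]
      simp only [smul_sub, smul_add, smul_tmul', smul_eq_mul, lrAnchor_tmul, Derivation.leibniz]
      ring_nf
      simp only [add_tmul]
      abel
    | add x y hx hy =>
      simp only [smul_add, map_add, hx, hy]
      abel
  | add x y hx hy =>
    simp only [map_add, LinearMap.add_apply, Derivation.add_apply, hx, hy, smul_add, add_smul]
    abel

lemma lrB'_unit (α β : L) :
    B' ((1 : A') ⊗ₜ[A] α) ((1 : A') ⊗ₜ[A] β) = (1 : A') ⊗ₜ[A] B α β := by
  rw [hB']
  simp only [Derivation.map_one_eq_zero, one_mul, mul_one, mul_zero, zero_tmul, sub_zero, add_zero]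

end Props

section Jac
variable (B' : (A' ⊗[A] L) →ₗ[R] (A' ⊗[A] L) →ₗ[R] (A' ⊗[A] L))
  (hB' : ∀ (u v : A') (α β : L),
      B' (u ⊗ₜ[A] α) (v ⊗ₜ[A] β)
        = (u * v) ⊗ₜ[A] B α β - (v * τ β u) ⊗ₜ[A] α + (u * τ α v) ⊗ₜ[A] β)
  (hjac : ∀ α β γ, B α (B β γ) + B β (B γ α) + B γ (B α β) = 0)
  (hτlie : ∀ (α β : L) (w : A'), τ (B α β) w = τ α (τ β w) - τ β (τ α w))

include hB' hjac hτlie halt in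
lemma lrB'_jacobi_pure (u v w : A') (α β γ : L) :
    B' (u ⊗ₜ[A] α) (B' (v ⊗ₜ[A] β) (w ⊗ₜ[A] γ))
      + B' (v ⊗ₜ[A] β) (B' (w ⊗ₜ[A] γ) (u ⊗ₜ[A] α))
      + B' (w ⊗ₜ[A] γ) (B' (u ⊗ₜ[A] α) (v ⊗ₜ[A] β)) = 0 := by
  have hj : B γ (B α β) = -B α (B β γ) + -(B β (B γ α)) := by
    have h := hjac α β γ
    rw [(eq_neg_of_add_eq_zero_right h : B γ (B α β) = -(B α (B β γ) + B β (B γ α)))]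
    abel
  have sk1 : B β α = -B α β := lr_skew B halt α β
  have sk2 : B γ β = -B β γ := lr_skew B halt β γ
  have sk3 : B α γ = -B γ α := lr_skew B halt γ α
  rw [hB' v w β γ, hB' w u γ α, hB' u v α β]
  simp only [map_sub, map_add, LinearMap.sub_apply, LinearMap.add_apply]
  simp only [hB']
  simp only [hj, sk1, sk2, sk3, hτlie, Derivation.leibniz, smul_eq_mul, map_sub,
    Derivation.sub_apply]
  simp only [tmul_neg, neg_tmul, tmul_sub, sub_tmul, tmul_add, add_tmul, mul_neg, neg_mul,
    mul_sub, sub_mul, mul_add, add_mul, neg_neg]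
  ring_nf
  abel

end Jac

section Jac2
variable (B' : (A' ⊗[A] L) →ₗ[R] (A' ⊗[A] L) →ₗ[R] (A' ⊗[A] L))
  (hB' : ∀ (u v : A') (α β : L),
      B' (u ⊗ₜ[A] α) (v ⊗ₜ[A] β)
        = (u * v) ⊗ₜ[A] B α β - (v * τ β u) ⊗ₜ[A] α + (u * τ α v) ⊗ₜ[A] β)
  (hjac : ∀ α β γ, B α (B β γ) + B β (B γ α) + B γ (B α β) = 0)
  (hτlie : ∀ (α β : L) (w : A'), τ (B α β) w = τ α (τ β w) - τ β (τ α w))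

include hB' hjac hτlie halt in
lemma lrB'_jacobi (ξ η ζ : A' ⊗[A] L) :
    B' ξ (B' η ζ) + B' η (B' ζ ξ) + B' ζ (B' ξ η) = 0 := by
  induction ξ using TensorProduct.induction_on with
  | zero => simp
  | tmul u α =>
    induction η using TensorProduct.induction_on with
    | zero => simp
    | tmul v β =>
      induction ζ using TensorProduct.induction_on with
      | zero => simp
      | tmul w γ => exact lrB'_jacobi_pure A B τ halt B' hB' hjac hτlie u v w α β γ
      | add x y hx hy =>
        have h2 : B' (u ⊗ₜ[A] α) (B' (v ⊗ₜ[A] β) (x + y))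
              + B' (v ⊗ₜ[A] β) (B' (x + y) (u ⊗ₜ[A] α))
              + B' (x + y) (B' (u ⊗ₜ[A] α) (v ⊗ₜ[A] β))
            = (B' (u ⊗ₜ[A] α) (B' (v ⊗ₜ[A] β) x) + B' (v ⊗ₜ[A] β) (B' x (u ⊗ₜ[A] α))
                + B' x (B' (u ⊗ₜ[A] α) (v ⊗ₜ[A] β)))
              + (B' (u ⊗ₜ[A] α) (B' (v ⊗ₜ[A] β) y) + B' (v ⊗ₜ[A] β) (B' y (u ⊗ₜ[A] α))
                + B' y (B' (u ⊗ₜ[A] α) (v ⊗ₜ[A] β))) := by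
          simp only [map_add, LinearMap.add_apply]; abel
        rw [h2, hx, hy, add_zero]
    | add x y hx hy =>
      have h2 : B' (u ⊗ₜ[A] α) (B' (x + y) ζ) + B' (x + y) (B' ζ (u ⊗ₜ[A] α))
            + B' ζ (B' (u ⊗ₜ[A] α) (x + y))
          = (B' (u ⊗ₜ[A] α) (B' x ζ) + B' x (B' ζ (u ⊗ₜ[A] α))
              + B' ζ (B' (u ⊗ₜ[A] α) x))
            + (B' (u ⊗ₜ[A] α) (B' y ζ) + B' y (B' ζ (u ⊗ₜ[A] α))
              + B' ζ (B' (u ⊗ₜ[A] α) y)) := by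
        simp only [map_add, LinearMap.add_apply]; abel
      rw [h2, hx, hy, add_zero]
  | add x y hx hy =>
    have h2 : B' (x + y) (B' η ζ) + B' η (B' ζ (x + y)) + B' ζ (B' (x + y) η)
        = (B' x (B' η ζ) + B' η (B' ζ x) + B' ζ (B' x η))
          + (B' y (B' η ζ) + B' η (B' ζ y) + B' ζ (B' y η)) := by
      simp only [map_add, LinearMap.add_apply]; abel
    rw [h2, hx, hy, add_zero]

end Jac2

lemma lrB'_unique (B₁ B₂ : (A' ⊗[A] L) →ₗ[R] (A' ⊗[A] L) →ₗ[R] (A' ⊗[A] L))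
    (h1 : ∀ (u v : A') (α β : L),
      B₁ (u ⊗ₜ[A] α) (v ⊗ₜ[A] β)
        = (u * v) ⊗ₜ[A] B α β - (v * τ β u) ⊗ₜ[A] α + (u * τ α v) ⊗ₜ[A] β)
    (h2 : ∀ (u v : A') (α β : L),
      B₂ (u ⊗ₜ[A] α) (v ⊗ₜ[A] β)
        = (u * v) ⊗ₜ[A] B α β - (v * τ β u) ⊗ₜ[A] α + (u * τ α v) ⊗ₜ[A] β) :
    B₁ = B₂ := by
  refine LinearMap.ext fun ξ => LinearMap.ext fun η => ?_
  induction ξ using TensorProduct.induction_on with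
  | zero => simp
  | tmul u α =>
    induction η using TensorProduct.induction_on with
    | zero => simp
    | tmul v β => rw [h1, h2]
    | add x y hx hy => simp only [map_add, hx, hy]
  | add x y hx hy => simp only [map_add, LinearMap.add_apply, hx, hy]

end LRAux2


/-- **Proposition 1.16** (induced Lie–Rinehart structure).
Given an `(R,A)`-Lie algebra `(L, B, ρ)`, an `R`-algebra map `φ = algebraMap A A'`,
and a morphism `τ : L → Der_R(A')` of Lie algebras over `R` compatible with `φ`
and satisfying `τ (a • α) = φ a • τ α`, the module `L' = A' ⊗[A] L` carries a
unique `R`-bilinear bracket with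
`[u ⊗ α, v ⊗ β] = (uv) ⊗ [α,β] − (v·τ β u) ⊗ α + (u·τ α v) ⊗ β`;
this bracket is alternating and satisfies the Jacobi identity, the pairing
`(u ⊗ α, w) ↦ u·τ α w` induces an `A'`-linear anchor `ρ'` which is a Lie algebra
morphism, the Leibniz rule `[ξ, w•η] = w•[ξ,η] + ρ' ξ w • η` holds, and
`α ↦ 1 ⊗ α` is a morphism of Lie algebras over `R`. -/
theorem induced_lie_rinehart_structure
    (R A A' L : Type*) [CommRing R] [CommRing A] [Algebra R A]
    [CommRing A'] [Algebra R A'] [Algebra A A'] [IsScalarTower R A A']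
    [AddCommGroup L] [Module R L] [Module A L] [IsScalarTower R A L]
    (B : L →ₗ[R] L →ₗ[R] L)
    (ρ : L →ₗ[A] Derivation R A A)
    (halt : ∀ α, B α α = 0)
    (hjac : ∀ α β γ, B α (B β γ) + B β (B γ α) + B γ (B α β) = 0)
    (hanch : ∀ (α β : L) (a : A), ρ (B α β) a = ρ α (ρ β a) - ρ β (ρ α a))
    (hleib : ∀ (α β : L) (a : A), B α (a • β) = a • B α β + (ρ α a) • β)
    (τ : L →ₗ[R] Derivation R A' A')
    (hτlie : ∀ (α β : L) (w : A'), τ (B α β) w = τ α (τ β w) - τ β (τ α w))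
    (hτφ : ∀ (α : L) (a : A), τ α (algebraMap A A' a) = algebraMap A A' (ρ α a))
    (hτA : ∀ (a : A) (α : L) (w : A'),
      τ (a • α) w = algebraMap A A' a * τ α w) :
    (∃! B' : (A' ⊗[A] L) →ₗ[R] (A' ⊗[A] L) →ₗ[R] (A' ⊗[A] L),
      ∀ (u v : A') (α β : L),
        B' (u ⊗ₜ[A] α) (v ⊗ₜ[A] β)
          = (u * v) ⊗ₜ[A] B α β - (v * τ β u) ⊗ₜ[A] α + (u * τ α v) ⊗ₜ[A] β) ∧
    (∀ B' : (A' ⊗[A] L) →ₗ[R] (A' ⊗[A] L) →ₗ[R] (A' ⊗[A] L),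
      (∀ (u v : A') (α β : L),
        B' (u ⊗ₜ[A] α) (v ⊗ₜ[A] β)
          = (u * v) ⊗ₜ[A] B α β - (v * τ β u) ⊗ₜ[A] α + (u * τ α v) ⊗ₜ[A] β) →
      (∀ ξ, B' ξ ξ = 0) ∧
      (∀ ξ η ζ, B' ξ (B' η ζ) + B' η (B' ζ ξ) + B' ζ (B' ξ η) = 0) ∧
      (∃ ρ' : (A' ⊗[A] L) →ₗ[A'] Derivation R A' A',
        (∀ (u : A') (α : L) (w : A'), ρ' (u ⊗ₜ[A] α) w = u * τ α w) ∧
        (∀ (ξ η : A' ⊗[A] L) (w : A'),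
          ρ' (B' ξ η) w = ρ' ξ (ρ' η w) - ρ' η (ρ' ξ w)) ∧
        (∀ (ξ η : A' ⊗[A] L) (w : A'),
          B' ξ (w • η) = w • B' ξ η + (ρ' ξ w) • η)) ∧
      (∀ α β : L,
        B' ((1 : A') ⊗ₜ[A] α) ((1 : A') ⊗ₜ[A] β) = (1 : A') ⊗ₜ[A] B α β)) := by
  constructor
  · refine ⟨lrBracket A B ρ τ halt hleib hτφ hτA,
      fun u v α β => lrBracket_tmul A B ρ τ halt hleib hτφ hτA u v α β,
      fun y hy => lrB'_unique A B τ y (lrBracket A B ρ τ halt hleib hτφ hτA) hy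
        (fun u v α β => lrBracket_tmul A B ρ τ halt hleib hτφ hτA u v α β)⟩
  · intro B' hB'
    refine ⟨lrB'_alt A B τ halt B' hB',
      lrB'_jacobi A B τ halt B' hB' hjac hτlie,
      ⟨lrAnchor A τ hτA, lrAnchor_tmul A τ hτA,
        lrB'_anchor_lie A B τ hτA B' hB' hτlie,
        lrB'_leibniz A B τ hτA B' hB'⟩,
      lrB'_unit A B τ B' hB'⟩
end

section
/- Let R be a commutative ring, A a commutative R-algebra, (L,[·,·],ρ) an (R,A)-Lie algebra, M an A-module, and ω an L-connection on M with curvature Ω(α,β) := ω(α)∘ω(β) − ω(β)∘ω(α) − ω([α,β]). Then the generalized Bianchi identity holds: for all α,β,γ ∈ L, [ω(α), Ω(β,γ)] − [ω(β), Ω(α,γ)] + [ω(γ), Ω(α,β)] − Ω([α,β], γ) + Ω([α,γ], β) − Ω([β,γ], α) = 0 in End_R(M), where [φ,ψ] := φ∘ψ − ψ∘φ denotes the commutator of endomorphisms. (Bianchi identity (2.10).) -/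
/-- **Generalized Bianchi identity (2.10).**
Let `(L, B, ρ)` be an `(R,A)`-Lie algebra, `M` an `A`-module and `ω` an
`L`-connection on `M` with curvature `Ωc α β = ω α * ω β − ω β * ω α − ω (B α β)`
(products in `End_R(M)` are composition).  Then for all `α β γ`:
`[ω α, Ωc β γ] − [ω β, Ωc α γ] + [ω γ, Ωc α β]
  − Ωc [α,β] γ + Ωc [α,γ] β − Ωc [β,γ] α = 0`. -/
theorem generalized_bianchi_identity
    (R A L M : Type*) [CommRing R] [CommRing A] [Algebra R A]
    [AddCommGroup L] [Module R L] [Module A L] [IsScalarTower R A L]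
    [AddCommGroup M] [Module R M] [Module A M] [IsScalarTower R A M]
    (B : L →ₗ[R] L →ₗ[R] L)
    (ρ : L →ₗ[A] Derivation R A A)
    (halt : ∀ α, B α α = 0)
    (hjac : ∀ α β γ, B α (B β γ) + B β (B γ α) + B γ (B α β) = 0)
    (hanch : ∀ (α β : L) (a : A), ρ (B α β) a = ρ α (ρ β a) - ρ β (ρ α a))
    (hleib : ∀ (α β : L) (a : A), B α (a • β) = a • B α β + (ρ α a) • β)
    (ω : L →ₗ[R] Module.End R M)
    (hω1 : ∀ (a : A) (α : L) (m : M), ω (a • α) m = a • ω α m)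
    (hω2 : ∀ (α : L) (a : A) (m : M), ω α (a • m) = a • ω α m + (ρ α a) • m)
    (Ωc : L → L → Module.End R M)
    (hΩc : ∀ α β : L, Ωc α β = ω α * ω β - ω β * ω α - ω (B α β)) :
    ∀ α β γ : L,
      (ω α * Ωc β γ - Ωc β γ * ω α)
        - (ω β * Ωc α γ - Ωc α γ * ω β)
        + (ω γ * Ωc α β - Ωc α β * ω γ)
        - Ωc (B α β) γ + Ωc (B α γ) β - Ωc (B β γ) α = 0 := by
  intro α β γ
  have hsk : ∀ a b : L, B a b = - B b a := by
    intro a b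
    have h := halt (a + b)
    simp only [map_add, LinearMap.add_apply, halt, zero_add, add_zero] at h
    exact eq_neg_of_add_eq_zero_right h
  have hc : B γ (B α β) = -(B α (B β γ) + B β (B γ α)) := by
    have h := hjac α β γ
    exact eq_neg_of_add_eq_zero_right h
  simp only [hΩc]
  rw [hsk (B α β) γ, hsk (B α γ) β, hsk (B β γ) α, hsk α γ]
  simp only [map_neg, hc, map_add]
  noncomm_ring
end

section
/- Let R be a commutative ring, A a commutative R-algebra, (L,[·,·],ρ) an (R,A)-Lie algebra, and let M₁ and M₂ be A-modules carrying L-connections ω₁ and ω₂ whose curvatures are scalar: there are A-bilinear alternating forms Ω₁, Ω₂ : L × L → A with ωᵢ(α)∘ωᵢ(β) − ωᵢ(β)∘ωᵢ(α) − ωᵢ([α,β]) = (scalar multiplication by Ωᵢ(α,β)) on Mᵢ for i = 1,2 and all α,β ∈ L. Then there is a unique R-linear map ω : L → End_R(M₁ ⊗_A M₂) with ω(α)(x ⊗ y) = (ω₁(α)(x)) ⊗ y + x ⊗ (ω₂(α)(y)) for all x ∈ M₁, y ∈ M₂; this ω is an L-connection on M₁ ⊗_A M₂; and its curvature is scalar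 multiplication by Ω₁ + Ω₂: ω(α)∘ω(β) − ω(β)∘ω(α) − ω([α,β]) = (scalar multiplication by Ω₁(α,β) + Ω₂(α,β)). (Key computation in the proof of Theorem 2.15: the curvature class is additive under tensor product of rank-one modules.) -/
open TensorProduct

open TensorProduct

section Aux
variable {R A M₁ M₂ : Type*} [CommRing R] [CommRing A] [Algebra R A]
    [AddCommGroup M₁] [Module R M₁] [Module A M₁] [IsScalarTower R A M₁]
    [AddCommGroup M₂] [Module R M₂] [Module A M₂] [IsScalarTower R A M₂]

noncomputable def connAux (f : Module.End R M₁) (g : Module.End R M₂) (d : A → A)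
    (hf : ∀ a m, f (a • m) = a • f m + d a • m)
    (hg : ∀ a m, g (a • m) = a • g m + d a • m) :
    M₁ ⊗[A] M₂ →+ M₁ ⊗[A] M₂ :=
  TensorProduct.liftAddHom
    { toFun := fun x =>
        { toFun := fun y => f x ⊗ₜ[A] y + x ⊗ₜ[A] g y
          map_zero' := by simp
          map_add' := by intro y z; simp [tmul_add]; abel }
      map_zero' := by ext y; simp
      map_add' := by intro x x'; ext y; simp [add_tmul]; abel }
    (by
      intro a x y
      simp only [AddMonoidHom.coe_mk, ZeroHom.coe_mk]
      rw [hf, hg]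
      simp [add_tmul, tmul_add, smul_tmul]
      abel)

@[simp] lemma connAux_tmul (f : Module.End R M₁) (g : Module.End R M₂) (d : A → A)
    (hf : ∀ a m, f (a • m) = a • f m + d a • m)
    (hg : ∀ a m, g (a • m) = a • g m + d a • m) (x : M₁) (y : M₂) :
    connAux f g d hf hg (x ⊗ₜ[A] y) = f x ⊗ₜ[A] y + x ⊗ₜ[A] g y := by
  simp [connAux]

noncomputable def connAuxEnd (f : Module.End R M₁) (g : Module.End R M₂) (d : A → A)
    (hf : ∀ a m, f (a • m) = a • f m + d a • m)
    (hg : ∀ a m, g (a • m) = a • g m + d a • m) :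
    Module.End R (M₁ ⊗[A] M₂) where
  toFun := connAux f g d hf hg
  map_add' := map_add _
  map_smul' := by
    intro r t
    show connAux f g d hf hg (r • t) = r • connAux f g d hf hg t
    induction t using TensorProduct.induction_on with
    | zero => simp
    | tmul x y =>
        rw [smul_tmul', connAux_tmul, connAux_tmul, f.map_smul, smul_add, ← smul_tmul', ← smul_tmul']
    | add s t hs ht =>
        rw [smul_add, map_add, map_add, hs, ht, smul_add]

@[simp] lemma connAuxEnd_tmul (f : Module.End R M₁) (g : Module.End R M₂) (d : A → A)
    (hf : ∀ a m, f (a • m) = a • f m + d a • m)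
    (hg : ∀ a m, g (a • m) = a • g m + d a • m) (x : M₁) (y : M₂) :
    connAuxEnd f g d hf hg (x ⊗ₜ[A] y) = f x ⊗ₜ[A] y + x ⊗ₜ[A] g y := by
  simp [connAuxEnd]

end Aux


set_option maxHeartbeats 1000000 in
/-- **Key computation in the proof of Theorem 2.15.**
Let `M₁` and `M₂` be `A`-modules carrying `L`-connections `ω₁`, `ω₂` whose
curvatures are scalar multiplication by `A`-bilinear alternating forms `Ω₁`,
`Ω₂`.  Then there is a unique `R`-linear map `ω : L → End_R (M₁ ⊗[A] M₂)` with
`ω α (x ⊗ y) = (ω₁ α x) ⊗ y + x ⊗ (ω₂ α y)`; this `ω` is an `L`-connection on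
`M₁ ⊗[A] M₂`, and its curvature is scalar multiplication by `Ω₁ + Ω₂`. -/
theorem tensor_product_connection_curvature_additive
    (R A L M₁ M₂ : Type*) [CommRing R] [CommRing A] [Algebra R A]
    [AddCommGroup L] [Module R L] [Module A L] [IsScalarTower R A L]
    [AddCommGroup M₁] [Module R M₁] [Module A M₁] [IsScalarTower R A M₁]
    [AddCommGroup M₂] [Module R M₂] [Module A M₂] [IsScalarTower R A M₂]
    (B : L →ₗ[R] L →ₗ[R] L)
    (ρ : L →ₗ[A] Derivation R A A)
    (halt : ∀ α, B α α = 0)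
    (hjac : ∀ α β γ, B α (B β γ) + B β (B γ α) + B γ (B α β) = 0)
    (hanch : ∀ (α β : L) (a : A), ρ (B α β) a = ρ α (ρ β a) - ρ β (ρ α a))
    (hleib : ∀ (α β : L) (a : A), B α (a • β) = a • B α β + (ρ α a) • β)
    (ω₁ : L →ₗ[R] Module.End R M₁)
    (hω₁1 : ∀ (a : A) (α : L) (m : M₁), ω₁ (a • α) m = a • ω₁ α m)
    (hω₁2 : ∀ (α : L) (a : A) (m : M₁), ω₁ α (a • m) = a • ω₁ α m + (ρ α a) • m)
    (ω₂ : L →ₗ[R] Module.End R M₂)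
    (hω₂1 : ∀ (a : A) (α : L) (m : M₂), ω₂ (a • α) m = a • ω₂ α m)
    (hω₂2 : ∀ (α : L) (a : A) (m : M₂), ω₂ α (a • m) = a • ω₂ α m + (ρ α a) • m)
    (Ω₁ Ω₂ : L →ₗ[A] L →ₗ[A] A)
    (hΩ₁alt : ∀ α, Ω₁ α α = 0) (hΩ₂alt : ∀ α, Ω₂ α α = 0)
    (hcurv₁ : ∀ (α β : L) (m : M₁),
      ω₁ α (ω₁ β m) - ω₁ β (ω₁ α m) - ω₁ (B α β) m = (Ω₁ α β) • m)
    (hcurv₂ : ∀ (α β : L) (m : M₂),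
      ω₂ α (ω₂ β m) - ω₂ β (ω₂ α m) - ω₂ (B α β) m = (Ω₂ α β) • m) :
    (∃! ω : L →ₗ[R] Module.End R (M₁ ⊗[A] M₂),
      ∀ (α : L) (x : M₁) (y : M₂),
        ω α (x ⊗ₜ[A] y) = (ω₁ α x) ⊗ₜ[A] y + x ⊗ₜ[A] (ω₂ α y)) ∧
    (∀ ω : L →ₗ[R] Module.End R (M₁ ⊗[A] M₂),
      (∀ (α : L) (x : M₁) (y : M₂),
        ω α (x ⊗ₜ[A] y) = (ω₁ α x) ⊗ₜ[A] y + x ⊗ₜ[A] (ω₂ α y)) →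
      (∀ (a : A) (α : L) (t : M₁ ⊗[A] M₂), ω (a • α) t = a • ω α t) ∧
      (∀ (α : L) (a : A) (t : M₁ ⊗[A] M₂),
        ω α (a • t) = a • ω α t + (ρ α a) • t) ∧
      (∀ (α β : L) (t : M₁ ⊗[A] M₂),
        ω α (ω β t) - ω β (ω α t) - ω (B α β) t
          = (Ω₁ α β + Ω₂ α β) • t)) := by
  
  classical
  have hf1 : ∀ (α : L) (a : A) (m : M₁), ω₁ α (a • m) = a • ω₁ α m + (ρ α) a • m :=
    fun α a m => hω₁2 α a m
  have hf2 : ∀ (α : L) (a : A) (m : M₂), ω₂ α (a • m) = a • ω₂ α m + (ρ α) a • m :=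
    fun α a m => hω₂2 α a m
  constructor
  · refine ⟨⟨⟨fun α => connAuxEnd (ω₁ α) (ω₂ α) (fun a => ρ α a) (hf1 α) (hf2 α), ?_⟩, ?_⟩,
      (fun α x y => connAuxEnd_tmul _ _ _ _ _ x y), ?_⟩
    · intro α β
      apply LinearMap.ext; intro t
      induction t using TensorProduct.induction_on with
      | zero => simp
      | tmul x y =>
          simp only [connAuxEnd_tmul, map_add, LinearMap.add_apply, add_tmul, tmul_add]
          abel
      | add s t hs ht =>
          simp only [map_add, LinearMap.add_apply] at hs ht ⊢
          rw [hs, ht]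
    · intro r α
      apply LinearMap.ext; intro t
      induction t using TensorProduct.induction_on with
      | zero => simp
      | tmul x y =>
          simp only [connAuxEnd_tmul, map_smul, RingHom.id_apply, LinearMap.smul_apply,
            smul_add, smul_tmul', smul_tmul]
      | add s t hs ht =>
          simp only [map_add, RingHom.id_apply, LinearMap.smul_apply] at hs ht ⊢
          rw [hs, ht]
    · intro ω' h'
      apply LinearMap.ext; intro α
      apply LinearMap.ext; intro t
      induction t using TensorProduct.induction_on with
      | zero => simp
      | tmul x y => rw [h']; simp
      | add s t hs ht => simp only [map_add, hs, ht]
  · intro ω h'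
    refine ⟨?_, ?_, ?_⟩
    · intro a α t
      induction t using TensorProduct.induction_on with
      | zero => simp
      | tmul x y =>
          simp only [h', hω₁1, hω₂1, smul_add, smul_tmul', tmul_smul]
      | add s t hs ht =>
          rw [map_add, map_add, hs, ht, smul_add]
    · intro α a t
      induction t using TensorProduct.induction_on with
      | zero => simp
      | tmul x y =>
          rw [smul_tmul' a x y, h' α (a • x) y, hω₁2 α a x, add_tmul, h' α x y, smul_add,
            ← smul_tmul' a (ω₁ α x) y, ← smul_tmul' (ρ α a) x y, ← smul_tmul' a x (ω₂ α y)]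
          abel
      | add s t hs ht =>
          rw [smul_add, map_add, hs, ht, map_add, smul_add, smul_add]
          abel
    · intro α β t
      induction t using TensorProduct.induction_on with
      | zero => simp
      | tmul x y =>
          have e1 := hcurv₁ α β x
          have e2 := hcurv₂ α β y
          have hr : (Ω₁ α β + Ω₂ α β) • (x ⊗ₜ[A] y)
              = (Ω₁ α β • x) ⊗ₜ[A] y + x ⊗ₜ[A] (Ω₂ α β • y) := by
            rw [add_smul, smul_tmul', tmul_smul]
          rw [hr, ← e1, ← e2]
          simp only [h', map_add, sub_tmul, tmul_sub]
          abel
      | add s t hs ht =>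
          simp only [map_add, smul_add, ← hs, ← ht]
          abel
end

section
/- Let R be a commutative ring, A a commutative R-algebra, (L,[·,·],ρ) an (R,A)-Lie algebra, and M an A-module. Let DO(A,L,M) be the set of pairs (β,α) ∈ End_R(M) × L such that β(a•m) = ρ(α)(a)•m + a•β(m) for all a ∈ A and m ∈ M. Then: (i) if (β,α) and (β',α') lie in DO(A,L,M), then so does (β∘β' − β'∘β, [α,α']); (ii) if (β,α) ∈ DO(A,L,M) and b ∈ A, then (m ↦ b•β(m), b•α) ∈ DO(A,L,M). Consequently DO(A,L,M) is a Lie subalgebra over R of End_R(M) × L with the componentwise commutator bracket, it is stable under the A-action (b,(β,α)) ↦ (b•β, b•α), and for every A-linear endomorphism μ of M the pair (μ, 0) lies in DO(A,L,M). (Construction of the infinitesimal gauge algebra, (2.11.4)–(2.11.8).) -/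
/-- **Construction of the infinitesimal gauge algebra (2.11.4)–(2.11.8).**
Let `(L, B, ρ)` be an `(R,A)`-Lie algebra and `M` an `A`-module.  Let
`DO` be the predicate on `End_R(M) × L` singling out the pairs `(β, α)` with
`β (a • m) = ρ α a • m + a • β m`.  Then `DO` is closed under the componentwise
commutator bracket, it is stable under the `A`-action `(b, (β,α)) ↦ (b•β, b•α)`,
and for every `A`-linear endomorphism `μ` of `M` the pair `(μ, 0)` belongs to
`DO`.  Hence `DO(A,L,M)` is a Lie subalgebra over `R` of `End_R(M) × L`, stable
under the `A`-action, containing `End_A(M)`. -/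
theorem infinitesimal_gauge_algebra_closure
    (R A L M : Type*) [CommRing R] [CommRing A] [Algebra R A]
    [AddCommGroup L] [Module R L] [Module A L] [IsScalarTower R A L]
    [AddCommGroup M] [Module R M] [Module A M] [IsScalarTower R A M]
    (B : L →ₗ[R] L →ₗ[R] L)
    (ρ : L →ₗ[A] Derivation R A A)
    (halt : ∀ α, B α α = 0)
    (hjac : ∀ α β γ, B α (B β γ) + B β (B γ α) + B γ (B α β) = 0)
    (hanch : ∀ (α β : L) (a : A), ρ (B α β) a = ρ α (ρ β a) - ρ β (ρ α a))
    (hleib : ∀ (α β : L) (a : A), B α (a • β) = a • B α β + (ρ α a) • β)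
    (DO : Module.End R M × L → Prop)
    (hDO : ∀ (β : Module.End R M) (α : L),
      DO (β, α) ↔ ∀ (a : A) (m : M), β (a • m) = (ρ α a) • m + a • β m) :
    (∀ (β β' : Module.End R M) (α α' : L),
      DO (β, α) → DO (β', α') → DO (β * β' - β' * β, B α α')) ∧
    (∀ (b : A) (β : Module.End R M) (α : L),
      DO (β, α) → DO (b • β, b • α)) ∧
    (∀ μ : M →ₗ[A] M, DO (LinearMap.restrictScalars R μ, 0)) := by
  refine ⟨?_, ?_, ?_⟩
  · intro β β' α α' h h'
    rw [hDO] at h h' ⊢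
    intro a m
    simp only [LinearMap.sub_apply, Module.End.mul_apply, h, h', map_add, map_smul, hanch,
      sub_smul, smul_add, smul_smul, mul_comm]
    module
  · intro b β α h
    rw [hDO] at h ⊢
    intro a m
    simp only [LinearMap.smul_apply, h, map_smul, Derivation.coe_smul, Pi.smul_apply,
      smul_add, smul_smul, smul_eq_mul, mul_comm]
  · intro μ
    rw [hDO]
    intro a m
    simp
end

section
/- Let R be a commutative ring, A a commutative R-algebra, (L,[·,·],ρ) an (R,A)-Lie algebra, and M an A-module equipped with a flat L-action σ : L → End_R(M), i.e. σ(a•α)(m) = a•(σ(α)(m)), σ(α)(a•m) = a•(σ(α)(m)) + ρ(α)(a)•m, and σ([α,β]) = σ(α)∘σ(β) − σ(β)∘σ(α) for all α,β ∈ L, a ∈ A, m ∈ M. Let Ω : L × L → M be an A-bilinear alternating map, and endow M × L with the bracket [(x,α),(y,β)] := (σ(α)(y) − σ(β)(x) + Ω(α,β), [α,β]). This bracket is R-bilinear and alternating, and it satisfies the Jacobi identity — so that M × L becomes a Lie algebra over R, giving an extension of L by the abelian Lie algebra M split as A-modules — if and only if Ω is a 2-cocycle: σ(α)(Ω(β,γ))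 − σ(β)(Ω(α,γ)) + σ(γ)(Ω(α,β)) − Ω([α,β], γ) + Ω([α,γ], β) − Ω([β,γ], α) = 0 for all α,β,γ ∈ L. (The correspondence between 2-cocycles and extensions underlying Theorem 2.6.) -/
/-- **The correspondence between 2-cocycles and extensions (Theorem 2.6).**
Let `(L, B, ρ)` be an `(R,A)`-Lie algebra, `M` an `A`-module with a flat
`L`-action `σ`, and `Ω : L × L → M` an `A`-bilinear alternating map.  Endow
`M × L` with the bracket
`Br (x,α) (y,β) = (σ α y − σ β x + Ω α β, B α β)`.  This bracket is `R`-bilinear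
and alternating, and it satisfies the Jacobi identity (making `M × L` a Lie
algebra over `R`, an extension of `L` by the abelian Lie algebra `M` split as
`A`-modules) if and only if `Ω` is a 2-cocycle. -/
theorem extension_bracket_jacobi_iff_two_cocycle
    (R A L M : Type*) [CommRing R] [CommRing A] [Algebra R A]
    [AddCommGroup L] [Module R L] [Module A L] [IsScalarTower R A L]
    [AddCommGroup M] [Module R M] [Module A M] [IsScalarTower R A M]
    (B : L →ₗ[R] L →ₗ[R] L)
    (ρ : L →ₗ[A] Derivation R A A)
    (halt : ∀ α, B α α = 0)
    (hjac : ∀ α β γ, B α (B β γ) + B β (B γ α) + B γ (B α β) = 0)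
    (hanch : ∀ (α β : L) (a : A), ρ (B α β) a = ρ α (ρ β a) - ρ β (ρ α a))
    (hleib : ∀ (α β : L) (a : A), B α (a • β) = a • B α β + (ρ α a) • β)
    (σ : L →ₗ[R] Module.End R M)
    (hσ1 : ∀ (a : A) (α : L) (m : M), σ (a • α) m = a • σ α m)
    (hσ2 : ∀ (α : L) (a : A) (m : M), σ α (a • m) = a • σ α m + (ρ α a) • m)
    (hσflat : ∀ (α β : L) (m : M), σ (B α β) m = σ α (σ β m) - σ β (σ α m))
    (Ω : L →ₗ[A] L →ₗ[A] M)
    (hΩalt : ∀ α, Ω α α = 0)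
    (Br : M × L → M × L → M × L)
    (hBr : ∀ (x : M) (α : L) (y : M) (β : L),
      Br (x, α) (y, β) = (σ α y - σ β x + Ω α β, B α β)) :
    (∀ p q q' : M × L, Br (p + q) q' = Br p q' + Br q q') ∧
    (∀ p q q' : M × L, Br p (q + q') = Br p q + Br p q') ∧
    (∀ (r : R) (p q : M × L), Br (r • p) q = r • Br p q) ∧
    (∀ (r : R) (p q : M × L), Br p (r • q) = r • Br p q) ∧
    (∀ p : M × L, Br p p = 0) ∧
    ((∀ p q r' : M × L, Br p (Br q r') + Br q (Br r' p) + Br r' (Br p q) = 0) ↔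
      (∀ α β γ : L,
        σ α (Ω β γ) - σ β (Ω α γ) + σ γ (Ω α β)
          - Ω (B α β) γ + Ω (B α γ) β - Ω (B β γ) α = 0)) := by
  have hΩsk : ∀ a b : L, Ω b a = - Ω a b := by
    intro a b
    have h := hΩalt (a + b)
    simp only [map_add, LinearMap.add_apply, hΩalt, zero_add, add_zero] at h
    exact eq_neg_of_add_eq_zero_left h
  have hBsk : ∀ a b : L, B b a = - B a b := by
    intro a b
    have h := halt (a + b)
    simp only [map_add, LinearMap.add_apply, halt, zero_add, add_zero] at h
    exact eq_neg_of_add_eq_zero_left h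
  -- the "raw" cyclic cocycle expression vs. the normalized one
  have key : ∀ α β γ : L,
      σ α (Ω β γ) + Ω α (B β γ) + (σ β (Ω γ α) + Ω β (B γ α))
        + (σ γ (Ω α β) + Ω γ (B α β))
      = σ α (Ω β γ) - σ β (Ω α γ) + σ γ (Ω α β)
          - Ω (B α β) γ + Ω (B α γ) β - Ω (B β γ) α := by
    intro α β γ
    have h1 : σ β (Ω γ α) = - σ β (Ω α γ) := by rw [hΩsk α γ, map_neg]
    have h2 : Ω α (B β γ) = - Ω (B β γ) α := hΩsk (B β γ) α
    have h3 : Ω β (B γ α) = Ω (B α γ) β := by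
      rw [hBsk α γ, map_neg, hΩsk (B α γ) β, neg_neg]
    have h4 : Ω γ (B α β) = - Ω (B α β) γ := hΩsk (B α β) γ
    rw [h1, h2, h3, h4]; abel
  refine ⟨?_, ?_, ?_, ?_, ?_, ?_⟩
  · rintro ⟨x, α⟩ ⟨y, β⟩ ⟨z, γ⟩
    simp only [Prod.mk_add_mk, hBr, map_add, LinearMap.add_apply, Prod.mk.injEq]
    exact ⟨by abel, trivial⟩
  · rintro ⟨x, α⟩ ⟨y, β⟩ ⟨z, γ⟩
    simp only [Prod.mk_add_mk, hBr, map_add, LinearMap.add_apply, Prod.mk.injEq]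
    exact ⟨by abel, trivial⟩
  · rintro r ⟨x, α⟩ ⟨y, β⟩
    simp only [Prod.smul_mk, hBr, map_smul, LinearMap.smul_apply,
      LinearMap.map_smul_of_tower, Prod.mk.injEq]
    constructor
    · rw [smul_add, smul_sub]
    · trivial
  · rintro r ⟨x, α⟩ ⟨y, β⟩
    simp only [Prod.smul_mk, hBr, map_smul, LinearMap.smul_apply,
      LinearMap.map_smul_of_tower, Prod.mk.injEq]
    constructor
    · rw [smul_add, smul_sub]
    · trivial
  · rintro ⟨x, α⟩
    simp only [hBr, hΩalt, halt, sub_self, zero_add, Prod.mk_eq_zero, and_self]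
  · constructor
    · intro h α β γ
      have h0 := h (0, α) (0, β) (0, γ)
      simp only [hBr, map_zero, sub_zero, zero_sub, neg_zero, zero_add, add_zero,
        sub_self] at h0
      rw [Prod.ext_iff] at h0
      have h1 := h0.1
      simp only [Prod.fst_add] at h1
      rw [← key α β γ]
      convert h1 using 1; rfl
    · intro hc
      rintro ⟨x, α⟩ ⟨y, β⟩ ⟨z, γ⟩
      simp only [hBr, map_add, map_sub, LinearMap.add_apply, hσflat,
        Prod.mk_add_mk, Prod.mk_eq_zero]
      constructor
      · have hraw : σ α (Ω β γ) + Ω α (B β γ) + (σ β (Ω γ α) + Ω β (B γ α))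
            + (σ γ (Ω α β) + Ω γ (B α β)) = 0 := by
          rw [key α β γ]; exact hc α β γ
        calc _ = σ α (Ω β γ) + Ω α (B β γ) + (σ β (Ω γ α) + Ω β (B γ α))
            + (σ γ (Ω α β) + Ω γ (B α β)) := by abel
        _ = 0 := hraw
      · exact hjac α β γ
end

section
/- Let R be a commutative ring, A a commutative R-algebra, {·,·} a Poisson structure on A, π the Poisson 2-form and [·,·] the Poisson–Rinehart bracket on Ω := Ω[A⁄R]. Endow L̄ := A × Ω with the bracket ⟦(a,α),(b,β)⟧ := (π(α, D b) − π(β, D a) − π(α,β), [α,β]). Then ⟦·,·⟧ is R-bilinear, alternating, and satisfies the Jacobi identity, making L̄ a Lie algebra over R; the map ι : A → L̄, ι(a) = (a, D a), is a morphism of Lie algebras over R from (A,{·,·}) to L̄, i.e. ⟦ι(a), ι(b)⟧ = ι({a,b}) for all a,b ∈ A; and ι satisfies ι(ab) = a•ι(b) + b•ι(a) − (ab, 0), where A acts on L̄ = A × Ω componentwise. (Proposition 4.2.) -/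
/-- **Proposition 4.2.**
Let `(A, P)` be a Poisson algebra over `R`, with Poisson 2-form `π` and
Poisson–Rinehart bracket `B` on `Ω := Ω[A⁄R]`.  Endow `L̄ := A × Ω` with the
bracket `Br (a,α) (b,β) = (π α (D b) − π β (D a) − π α β, B α β)`.  Then `Br`
is `R`-bilinear, alternating and satisfies the Jacobi identity, making `L̄` a
Lie algebra over `R`; the map `ι a = (a, D a)` is a morphism of Lie algebras
over `R` from `(A, P)` to `L̄`; and `ι (a b) = a • ι b + b • ι a − (a b, 0)`. -/
theorem prequantization_extension_proposition
    (R A : Type*) [CommRing R] [CommRing A] [Algebra R A]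
    (P : A →ₗ[R] A →ₗ[R] A)
    (hPalt : ∀ a : A, P a a = 0)
    (hPjac : ∀ a b c : A, P a (P b c) + P b (P c a) + P c (P a b) = 0)
    (hPleib : ∀ a b c : A, P (a * b) c = a * P b c + P a c * b)
    (π : KaehlerDifferential R A →ₗ[A] KaehlerDifferential R A →ₗ[A] A)
    (hπalt : ∀ α, π α α = 0)
    (hπD : ∀ u v : A,
      π (KaehlerDifferential.D R A u) (KaehlerDifferential.D R A v) = P u v)
    (B : KaehlerDifferential R A →ₗ[R] KaehlerDifferential R A →ₗ[R]
        KaehlerDifferential R A)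
    (hB : ∀ a b u v : A,
      B (a • KaehlerDifferential.D R A u) (b • KaehlerDifferential.D R A v)
        = (a * P u b) • KaehlerDifferential.D R A v
          + (b * P a v) • KaehlerDifferential.D R A u
          + (a * b) • KaehlerDifferential.D R A (P u v))
    (hBalt : ∀ α, B α α = 0)
    (hBjac : ∀ α β γ, B α (B β γ) + B β (B γ α) + B γ (B α β) = 0)
    (hBleib : ∀ (α : KaehlerDifferential R A) (a : A)
        (β : KaehlerDifferential R A),
      B α (a • β) = a • B α β + (π α (KaehlerDifferential.D R A a)) • β)
    (hanch : ∀ (α β : KaehlerDifferential R A) (c : A),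
      π (B α β) (KaehlerDifferential.D R A c)
        = π α (KaehlerDifferential.D R A (π β (KaehlerDifferential.D R A c)))
          - π β (KaehlerDifferential.D R A
              (π α (KaehlerDifferential.D R A c))))
    (Br : A × KaehlerDifferential R A → A × KaehlerDifferential R A →
        A × KaehlerDifferential R A)
    (hBr : ∀ (a : A) (α : KaehlerDifferential R A) (b : A)
        (β : KaehlerDifferential R A),
      Br (a, α) (b, β)
        = (π α (KaehlerDifferential.D R A b)
            - π β (KaehlerDifferential.D R A a) - π α β, B α β)) :
    (∀ p q q' : A × KaehlerDifferential R A,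
      Br (p + q) q' = Br p q' + Br q q') ∧
    (∀ p q q' : A × KaehlerDifferential R A,
      Br p (q + q') = Br p q + Br p q') ∧
    (∀ (r : R) (p q : A × KaehlerDifferential R A), Br (r • p) q = r • Br p q) ∧
    (∀ (r : R) (p q : A × KaehlerDifferential R A), Br p (r • q) = r • Br p q) ∧
    (∀ p : A × KaehlerDifferential R A, Br p p = 0) ∧
    (∀ p q r' : A × KaehlerDifferential R A,
      Br p (Br q r') + Br q (Br r' p) + Br r' (Br p q) = 0) ∧
    (∀ a b : A,
      Br (a, KaehlerDifferential.D R A a) (b, KaehlerDifferential.D R A b)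
        = (P a b, KaehlerDifferential.D R A (P a b))) ∧
    (∀ a b : A,
      ((a * b, KaehlerDifferential.D R A (a * b)) :
          A × KaehlerDifferential R A)
        = a • ((b, KaehlerDifferential.D R A b) : A × KaehlerDifferential R A)
          + b • ((a, KaehlerDifferential.D R A a) : A × KaehlerDifferential R A)
          - (a * b, 0)) := by
  have Pskew : ∀ u v : A, P v u = -P u v := by
    intro u v
    have h := hPalt (u + v)
    simp only [map_add, LinearMap.add_apply, hPalt, zero_add, add_zero] at h
    linear_combination h
  have πskew : ∀ α β, π β α = -π α β := by
    intro α β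
    have h := hπalt (α + β)
    simp only [map_add, LinearMap.add_apply, hπalt, zero_add, add_zero] at h
    linear_combination h
  have Bskew : ∀ α β, B β α = -B α β := by
    intro α β
    have h := hBalt (α + β)
    simp only [map_add, LinearMap.add_apply, hBalt, zero_add, add_zero] at h
    rw [eq_neg_iff_add_eq_zero]
    exact h
  have hP1 : ∀ v : A, P 1 v = 0 := by
    intro v
    have h := hPleib 1 1 v
    simp only [one_mul, mul_one] at h
    linear_combination -h
  have hD1 : ∀ u v : A, B (KaehlerDifferential.D R A u) (KaehlerDifferential.D R A v)
      = KaehlerDifferential.D R A (P u v) := by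
    intro u v
    have h := hB 1 1 u v
    have hu1 : P u 1 = 0 := by rw [Pskew 1 u, hP1, neg_zero]
    simpa [hu1, hP1] using h
  have hBleib' : ∀ (a : A) (α β : KaehlerDifferential R A),
      B (a • α) β = a • B α β - (π β (KaehlerDifferential.D R A a)) • α := by
    intro a α β
    rw [Bskew β (a • α), hBleib β a α, Bskew α β]
    module
  have Ecyc : ∀ α β γ : KaehlerDifferential R A,
      π γ (B α β) + π α (B β γ) + π β (B γ α) + π γ (KaehlerDifferential.D R A (π α β)) + π α (KaehlerDifferential.D R A (π β γ)) + π β (KaehlerDifferential.D R A (π γ α)) = π α (B β γ) + π β (B γ α) + π γ (B α β) + π α (KaehlerDifferential.D R A (π β γ)) + π β (KaehlerDifferential.D R A (π γ α)) + π γ (KaehlerDifferential.D R A (π α β)) := by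
    intro α β γ
    ring
  have Eadd : ∀ α α' β γ : KaehlerDifferential R A,
      π γ (B (α + α') β) + π (α + α') (B β γ) + π β (B γ (α + α')) + π γ (KaehlerDifferential.D R A (π (α + α') β)) + π (α + α') (KaehlerDifferential.D R A (π β γ)) + π β (KaehlerDifferential.D R A (π γ (α + α'))) = (π γ (B α β) + π α (B β γ) + π β (B γ α) + π γ (KaehlerDifferential.D R A (π α β)) + π α (KaehlerDifferential.D R A (π β γ)) + π β (KaehlerDifferential.D R A (π γ α))) + (π γ (B α' β) + π α' (B β γ) + π β (B γ α') + π γ (KaehlerDifferential.D R A (π α' β)) + π α' (KaehlerDifferential.D R A (π β γ)) + π β (KaehlerDifferential.D R A (π γ α'))) := by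
    intro α α' β γ
    simp only [map_add, LinearMap.add_apply]
    ring
  have Ezero : ∀ β γ : KaehlerDifferential R A,
      π γ (B (0 : KaehlerDifferential R A) β) + π (0 : KaehlerDifferential R A) (B β γ) + π β (B γ (0 : KaehlerDifferential R A)) + π γ (KaehlerDifferential.D R A (π (0 : KaehlerDifferential R A) β)) + π (0 : KaehlerDifferential R A) (KaehlerDifferential.D R A (π β γ)) + π β (KaehlerDifferential.D R A (π γ (0 : KaehlerDifferential R A))) = 0 := by
    intro β γ
    simp
  have Esmul : ∀ (a : A) (α β γ : KaehlerDifferential R A),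
      π γ (B (a • α) β) + π (a • α) (B β γ) + π β (B γ (a • α)) + π γ (KaehlerDifferential.D R A (π (a • α) β)) + π (a • α) (KaehlerDifferential.D R A (π β γ)) + π β (KaehlerDifferential.D R A (π γ (a • α))) = a * (π γ (B α β) + π α (B β γ) + π β (B γ α) + π γ (KaehlerDifferential.D R A (π α β)) + π α (KaehlerDifferential.D R A (π β γ)) + π β (KaehlerDifferential.D R A (π γ α))) := by
    intro a α β γ
    rw [hBleib' a α β, hBleib γ a α]
    simp only [map_smul, map_sub, map_add, LinearMap.smul_apply, smul_eq_mul,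
      Derivation.leibniz]
    linear_combination (π γ (KaehlerDifferential.D R A a)) * πskew α β
  have Ebase : ∀ u v w : A,
      π (KaehlerDifferential.D R A w) (B (KaehlerDifferential.D R A u) (KaehlerDifferential.D R A v)) + π (KaehlerDifferential.D R A u) (B (KaehlerDifferential.D R A v) (KaehlerDifferential.D R A w)) + π (KaehlerDifferential.D R A v) (B (KaehlerDifferential.D R A w) (KaehlerDifferential.D R A u)) + π (KaehlerDifferential.D R A w) (KaehlerDifferential.D R A (π (KaehlerDifferential.D R A u) (KaehlerDifferential.D R A v))) + π (KaehlerDifferential.D R A u) (KaehlerDifferential.D R A (π (KaehlerDifferential.D R A v) (KaehlerDifferential.D R A w))) + π (KaehlerDifferential.D R A v) (KaehlerDifferential.D R A (π (KaehlerDifferential.D R A w) (KaehlerDifferential.D R A u))) = 0 := by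
    intro u v w
    simp only [hD1, hπD]
    linear_combination 2 * hPjac u v w
  have key0 : ∀ α β γ : KaehlerDifferential R A,
      π γ (B α β) + π α (B β γ) + π β (B γ α) + π γ (KaehlerDifferential.D R A (π α β)) + π α (KaehlerDifferential.D R A (π β γ)) + π β (KaehlerDifferential.D R A (π γ α)) = 0 := by
    have hmem : ∀ ω : KaehlerDifferential R A,
        ω ∈ Submodule.span A (Set.range (KaehlerDifferential.D R A)) := by
      intro ω
      rw [KaehlerDifferential.span_range_derivation]
      trivial
    intro α β γ
    rw [Ecyc, Ecyc]
    induction hmem γ using Submodule.span_induction with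
    | mem w hw =>
      obtain ⟨w, rfl⟩ := hw
      rw [Ecyc, Ecyc]
      induction hmem β using Submodule.span_induction with
      | mem v hv =>
        obtain ⟨v, rfl⟩ := hv
        rw [Ecyc, Ecyc]
        induction hmem α using Submodule.span_induction with
        | mem u hu =>
          obtain ⟨u, rfl⟩ := hu
          exact Ebase u v w
        | zero => exact Ezero _ _
        | add x y hx hy ihx ihy => rw [Eadd, ihx, ihy, add_zero]
        | smul a x hx ih => rw [Esmul, ih, mul_zero]
      | zero => exact Ezero _ _
      | add x y hx hy ihx ihy => rw [Eadd, ihx, ihy, add_zero]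
      | smul a x hx ih => rw [Esmul, ih, mul_zero]
    | zero => exact Ezero _ _
    | add x y hx hy ihx ihy => rw [Eadd, ihx, ihy, add_zero]
    | smul a x hx ih => rw [Esmul, ih, mul_zero]
  refine ⟨?_, ?_, ?_, ?_, ?_, ?_, ?_, ?_⟩
  · rintro ⟨a, α⟩ ⟨b, β⟩ ⟨c, γ⟩
    rw [Prod.mk_add_mk, hBr, hBr, hBr, Prod.mk_add_mk]
    simp only [Prod.mk.injEq]
    constructor
    · simp only [map_add, LinearMap.add_apply]
      ring
    · rw [map_add, LinearMap.add_apply]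
  · rintro ⟨a, α⟩ ⟨b, β⟩ ⟨c, γ⟩
    rw [Prod.mk_add_mk, hBr, hBr, hBr, Prod.mk_add_mk]
    simp only [Prod.mk.injEq]
    constructor
    · simp only [map_add, LinearMap.add_apply]
      ring
    · rw [map_add]
  · rintro r ⟨a, α⟩ ⟨b, β⟩
    rw [Prod.smul_mk, hBr, hBr, Prod.smul_mk]
    simp only [Prod.mk.injEq]
    constructor
    · simp only [Derivation.map_smul, LinearMap.map_smul_of_tower, LinearMap.smul_apply]
      module
    · rw [map_smul, LinearMap.smul_apply]
  · rintro r ⟨a, α⟩ ⟨b, β⟩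
    rw [Prod.smul_mk, hBr, hBr, Prod.smul_mk]
    simp only [Prod.mk.injEq]
    constructor
    · simp only [Derivation.map_smul, LinearMap.map_smul_of_tower, LinearMap.smul_apply]
      module
    · rw [map_smul]
  · rintro ⟨a, α⟩
    rw [hBr]
    simp [hπalt, hBalt, Prod.mk_eq_zero]
  · rintro ⟨a, α⟩ ⟨b, β⟩ ⟨c, γ⟩
    rw [hBr b β c γ, hBr c γ a α, hBr a α b β, hBr, hBr, hBr,
      Prod.mk_add_mk, Prod.mk_add_mk, Prod.mk_eq_zero]
    constructor
    · simp only [map_sub]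
      linear_combination (-1 : A) * hanch β γ a - hanch γ α b - hanch α β c - key0 α β γ
    · exact hBjac α β γ
  · intro a b
    rw [hBr]
    simp only [hπD, hD1, Prod.mk.injEq]
    constructor
    · linear_combination (-1 : A) * Pskew a b
    · trivial
  · intro a b
    simp only [Prod.smul_mk, Prod.mk_add_mk, Prod.mk_sub_mk, Prod.mk.injEq, smul_eq_mul]
    constructor
    · ring
    · rw [Derivation.leibniz]
      module
end

section
/- Let R be a commutative ring, A a commutative R-algebra, {·,·} a Poisson structure on A, π the Poisson 2-form and [·,·] the Poisson–Rinehart bracket on Ω := Ω[A⁄R]. Let M be an A-module and ∇ : Ω → End_R(M) an R-linear map satisfying ∇(a•α)(m) = a•(∇(α)(m)), ∇(α)(a•m) = a•(∇(α)(m)) + π(α, D a)•m, and having curvature −π: ∇(α)∘∇(β) − ∇(β)∘∇(α) − ∇([α,β]) = (scalar multiplication by −π(α,β)) for all α,β ∈ Ω, a ∈ A, m ∈ M. Define ρ : A → End_R(M) by ρ(a)(m) := ∇(D a)(m) + a•m. Then ρ is a representation of the Lie algebra (A,{·,·}) under which the elements of R act as scalars: ρ({a,b}) = ρ(a)∘ρ(b)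 − ρ(b)∘ρ(a) for all a,b ∈ A, and ρ(algebraMap R A r) = r•id_M for all r ∈ R. If moreover M is a faithful A-module and π is non-degenerate in the sense that the only α ∈ Ω with π(α, D c) = 0 for all c ∈ A is α = 0, then ρ is injective. (Theorem 4.3.) -/
/-- **Theorem 4.3.**
Let `(A, P)` be a representable Poisson algebra: `M` is an `A`-module and `conn`
is a connection on `M` along the Poisson–Rinehart `(R,A)`-Lie algebra of Kähler
differentials with curvature `−π`.  Then `T a m := conn (D a) m + a • m` defines a
representation of the Lie algebra `(A, P)` on `M` under which the elements of
`R` act as scalars; moreover if `M` is faithful and `π` is non-degenerate then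
the representation is faithful. -/
theorem representable_poisson_representation
    (R A M : Type*) [CommRing R] [CommRing A] [Algebra R A]
    [AddCommGroup M] [Module R M] [Module A M] [IsScalarTower R A M]
    (P : A →ₗ[R] A →ₗ[R] A)
    (hPalt : ∀ a : A, P a a = 0)
    (hPjac : ∀ a b c : A, P a (P b c) + P b (P c a) + P c (P a b) = 0)
    (hPleib : ∀ a b c : A, P (a * b) c = a * P b c + P a c * b)
    (π : KaehlerDifferential R A →ₗ[A] KaehlerDifferential R A →ₗ[A] A)
    (hπalt : ∀ α, π α α = 0)
    (hπD : ∀ u v : A,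
      π (KaehlerDifferential.D R A u) (KaehlerDifferential.D R A v) = P u v)
    (B : KaehlerDifferential R A →ₗ[R] KaehlerDifferential R A →ₗ[R]
        KaehlerDifferential R A)
    (hB : ∀ a b u v : A,
      B (a • KaehlerDifferential.D R A u) (b • KaehlerDifferential.D R A v)
        = (a * P u b) • KaehlerDifferential.D R A v
          + (b * P a v) • KaehlerDifferential.D R A u
          + (a * b) • KaehlerDifferential.D R A (P u v))
    (conn : KaehlerDifferential R A →ₗ[R] Module.End R M)
    (hconn1 : ∀ (a : A) (α : KaehlerDifferential R A) (m : M),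
      conn (a • α) m = a • conn α m)
    (hconn2 : ∀ (α : KaehlerDifferential R A) (a : A) (m : M),
      conn α (a • m) = a • conn α m + (π α (KaehlerDifferential.D R A a)) • m)
    (hcurv : ∀ (α β : KaehlerDifferential R A) (m : M),
      conn α (conn β m) - conn β (conn α m) - conn (B α β) m = (-(π α β)) • m)
    (T : A → M → M)
    (hT : ∀ (a : A) (m : M), T a m = conn (KaehlerDifferential.D R A a) m + a • m) :
    (∀ (a b : A) (m : M), T (P a b) m = T a (T b m) - T b (T a m)) ∧
    (∀ (r : R) (m : M), T (algebraMap R A r) m = r • m) ∧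
    ((∀ a b : A, (∀ m : M, a • m = b • m) → a = b) →
      (∀ α : KaehlerDifferential R A,
        (∀ c : A, π α (KaehlerDifferential.D R A c) = 0) → α = 0) →
      ∀ a b : A, (∀ m : M, T a m = T b m) → a = b) := by

  have hPanti : ∀ a b : A, P b a = - P a b := by
    intro a b
    have h := hPalt (a + b)
    simp only [map_add, LinearMap.add_apply, hPalt] at h
    linear_combination h
  have hP1 : ∀ c : A, P 1 c = 0 := by
    intro c
    have h := hPleib 1 1 c
    simp only [one_mul, mul_one] at h
    linear_combination -h
  set D := KaehlerDifferential.D R A with hD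
  have hBDD : ∀ u v : A, B (D u) (D v) = D (P u v) := by
    intro u v
    have hPu1 : P u 1 = 0 := by rw [hPanti 1 u, hP1, neg_zero]
    have h := hB 1 1 u v
    simpa [hP1, hPu1] using h
  have hπanti : ∀ α β, π β α = - π α β := by
    intro α β
    have h := hπalt (α + β)
    simp only [map_add, LinearMap.add_apply, hπalt] at h
    linear_combination h
  refine ⟨?_, ?_, ?_⟩
  · intro a b m
    have key := hcurv (D a) (D b) m
    rw [hBDD, hπD] at key
    simp only [hT, map_add, map_add, LinearMap.add_apply]
    rw [hconn2, hconn2, hπD, hπD, hPanti a b]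
    have hc : conn (D (P a b)) m
        = conn (D a) (conn (D b) m) - conn (D b) (conn (D a) m) + (P a b) • m := by
      linear_combination (norm := module) -key
    rw [hc]
    have hsc : a • (b • m) = b • (a • m) := by
      rw [smul_smul, smul_smul, mul_comm]
    simp only [smul_add, neg_smul]
    rw [hsc]
    abel
  · intro r m
    rw [hT, hD]
    rw [Derivation.map_algebraMap, map_zero]
    simp [algebraMap_smul]
  · intro hfaith hnd a b hab
    have h0 : ∀ m : M, conn (D (a - b)) m = -((a - b) • m) := by
      intro m
      have h := hab m
      rw [hT, hT] at h
      have : conn (D (a - b)) m = conn (D a) m - conn (D b) m := by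
        rw [map_sub, map_sub, LinearMap.sub_apply]
      rw [this]
      linear_combination (norm := module) h
    have hπ0 : ∀ c : A, π (D (a - b)) (D c) = 0 := by
      intro c
      apply hfaith _ 0
      intro m
      have h1 := hconn2 (D (a - b)) c m
      rw [h0, h0] at h1
      have hsc : (a - b) • (c • m) = c • ((a - b) • m) := by
        rw [smul_smul, smul_smul, mul_comm]
      have h2 : (π (D (a - b)) (D c)) • m = 0 := by
        linear_combination (norm := module) -h1 - hsc
      simpa using h2
    have hDab : D (a - b) = 0 := hnd _ hπ0
    have hz : ∀ m : M, (a - b) • m = (0 : A) • m := by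
      intro m
      have h3 := h0 m
      rw [hDab, map_zero] at h3
      simp only [LinearMap.zero_apply] at h3
      have h2 : (a - b) • m = 0 := by linear_combination (norm := module) h3
      simpa using h2
    have := hfaith _ _ hz
    have : a - b = 0 := by simpa using this
    exact sub_eq_zero.mp this
end

section
/- Let A be a commutative ℂ-algebra with a Poisson structure {·,·} (a ℂ-bilinear alternating bracket satisfying the Jacobi identity and the Leibniz rule), π its Poisson 2-form and [·,·] the Poisson–Rinehart bracket on Ω := Ω[A⁄ℂ]. Let M be an A-module and ∇ : Ω → End_ℂ(M) a ℂ-linear map satisfying ∇(a•α)(m) = a•(∇(α)(m)) and ∇(α)(a•m) = a•(∇(α)(m)) + π(α, D a)•m, whose curvature equals −i·π: ∇(α)∘∇(β) − ∇(β)∘∇(α) − ∇([α,β]) = (scalar multiplication by −i·π(α,β)) for all α,β ∈ Ω. For a ∈ A define the operator â : M → M by â(m) := −i•(∇(D a)(m)) + a•m. Then Dirac's quantization rule holds: for all a,b ∈ A, the operator associated to the Poisson bracket is i times the commutator, \widehat{\{a,b\}} = i•(â∘b̂ − b̂∘â), and for every c ∈ ℂ the operator associated to c·1_A is scalar multiplication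 by c. (Corollary 4.5.) -/
/-- **Corollary 4.5** (Dirac's quantization rule).
Let `A` be a commutative `ℂ`-algebra with a Poisson structure `P`, with Poisson
2-form `π` and Poisson–Rinehart bracket `B` on `Ω := Ω[A⁄ℂ]`.  Let `M` be an
`A`-module and `conn` a connection on `M` along `Ω` whose curvature equals
`−i·π`.  For `a : A` define `hat a m := −i • (conn (D a) m) + a • m`.  Then
`hat {a,b} = i • (hat a ∘ hat b − hat b ∘ hat a)`, and for every `c : ℂ` the
operator associated to `c • 1` is scalar multiplication by `c`. -/
theorem dirac_quantization_rule
    (A M : Type*) [CommRing A] [Algebra ℂ A]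
    [AddCommGroup M] [Module ℂ M] [Module A M] [IsScalarTower ℂ A M]
    (P : A →ₗ[ℂ] A →ₗ[ℂ] A)
    (hPalt : ∀ a : A, P a a = 0)
    (hPjac : ∀ a b c : A, P a (P b c) + P b (P c a) + P c (P a b) = 0)
    (hPleib : ∀ a b c : A, P (a * b) c = a * P b c + P a c * b)
    (π : KaehlerDifferential ℂ A →ₗ[A] KaehlerDifferential ℂ A →ₗ[A] A)
    (hπalt : ∀ α, π α α = 0)
    (hπD : ∀ u v : A,
      π (KaehlerDifferential.D ℂ A u) (KaehlerDifferential.D ℂ A v) = P u v)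
    (B : KaehlerDifferential ℂ A →ₗ[ℂ] KaehlerDifferential ℂ A →ₗ[ℂ]
        KaehlerDifferential ℂ A)
    (hB : ∀ a b u v : A,
      B (a • KaehlerDifferential.D ℂ A u) (b • KaehlerDifferential.D ℂ A v)
        = (a * P u b) • KaehlerDifferential.D ℂ A v
          + (b * P a v) • KaehlerDifferential.D ℂ A u
          + (a * b) • KaehlerDifferential.D ℂ A (P u v))
    (conn : KaehlerDifferential ℂ A →ₗ[ℂ] Module.End ℂ M)
    (hconn1 : ∀ (a : A) (α : KaehlerDifferential ℂ A) (m : M),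
      conn (a • α) m = a • conn α m)
    (hconn2 : ∀ (α : KaehlerDifferential ℂ A) (a : A) (m : M),
      conn α (a • m) = a • conn α m + (π α (KaehlerDifferential.D ℂ A a)) • m)
    (hcurv : ∀ (α β : KaehlerDifferential ℂ A) (m : M),
      conn α (conn β m) - conn β (conn α m) - conn (B α β) m
        = ((-Complex.I) • π α β) • m)
    (hat : A → M → M)
    (hhat : ∀ (a : A) (m : M),
      hat a m = (-Complex.I) • (conn (KaehlerDifferential.D ℂ A a) m) + a • m) :
    (∀ (a b : A) (m : M),
      hat (P a b) m = Complex.I • (hat a (hat b m) - hat b (hat a m))) ∧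
    (∀ (c : ℂ) (m : M), hat (algebraMap ℂ A c) m = c • m) := by
  have hsc : ∀ (c : ℂ) (a : A) (x : M), a • (c • x) = c • (a • x) := by
    intro c a x
    rw [← algebraMap_smul A c x, ← mul_smul, mul_comm, mul_smul, algebraMap_smul]
  have hP1 : ∀ c : A, P 1 c = 0 := by
    intro c
    have h := hPleib 1 1 c
    rw [one_mul, one_mul, mul_one] at h
    have h2 : P 1 c + P 1 c = P 1 c + 0 := by rw [add_zero]; exact h.symm
    exact add_left_cancel h2
  have hPskew : ∀ a b : A, P b a = -P a b := by
    intro a b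
    have h := hPalt (a + b)
    simp only [map_add, LinearMap.add_apply, hPalt, zero_add, add_zero] at h
    linear_combination h
  have hP1' : ∀ c : A, P c 1 = 0 := by
    intro c; rw [hPskew, hP1, neg_zero]
  have hBDD : ∀ a b : A, B (KaehlerDifferential.D ℂ A a) (KaehlerDifferential.D ℂ A b)
      = KaehlerDifferential.D ℂ A (P a b) := by
    intro a b
    have h := hB 1 1 a b
    simpa [hP1, hP1'] using h
  constructor
  · intro a b m
    have key : conn (KaehlerDifferential.D ℂ A a) (conn (KaehlerDifferential.D ℂ A b) m)
        = conn (KaehlerDifferential.D ℂ A b) (conn (KaehlerDifferential.D ℂ A a) m)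
          + conn (KaehlerDifferential.D ℂ A (P a b)) m
          + ((-Complex.I) • P a b) • m := by
      have h := hcurv (KaehlerDifferential.D ℂ A a) (KaehlerDifferential.D ℂ A b) m
      rw [hBDD, hπD] at h
      have := sub_eq_iff_eq_add.mp (sub_eq_iff_eq_add.mp h)
      rw [this]; abel
    simp only [hhat, map_add, map_smul, hconn2, hπD, smul_add, smul_sub, hsc, key,
      hPskew a b, smul_assoc, algebraMap_smul, smul_smul, mul_comm b a]
    simp only [mul_one, neg_mul, mul_neg, neg_neg, Complex.I_mul_I, neg_smul, one_smul,
      smul_add, smul_neg, smul_sub, smul_smul]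
    abel
  · intro c m
    have hD0 : KaehlerDifferential.D ℂ A (algebraMap ℂ A c) = 0 := by
      simpa using (KaehlerDifferential.D ℂ A).map_algebraMap c
    rw [hhat, hD0, map_zero, LinearMap.zero_apply, smul_zero, zero_add,
      algebraMap_smul]
end

section
/- Let R be a commutative ring, A a commutative R-algebra, {·,·} a Poisson structure on A, π the Poisson 2-form and [·,·] the Poisson–Rinehart bracket on Ω := Ω[A⁄R] (satisfying in particular π([α,β], Dc) = π(α, D(π(β,Dc))) − π(β, D(π(α,Dc)))). Suppose θ : Ω → A is an A-linear map which is a Poisson potential, i.e. π(α,β) = π(α, D(θ(β))) − π(β, D(θ(α))) − θ([α,β]) for all α,β ∈ Ω. Define ∇ : Ω → End_R(A) by ∇(α)(a) := π(α, D a) − a·θ(α). Then ∇ is a connection on the rank-one free A-module A: ∇(b•α)(a) = b·(∇(α)(a)) and ∇(α)(b·a) = b·(∇(α)(a)) + π(α, D b)·a for all a,b ∈ A, α ∈ Ω; and its curvature equals −π: ∇(α)∘∇(β) − ∇(β)∘∇(α) − ∇([α,β]) = (multiplication by −π(α,β)) for all α,β ∈ Ω. In particular a Poisson algebra whose Poisson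 2-form admits a Poisson potential is representable. (Construction (4.3.1).) -/
/-- **Construction (4.3.1).**
Let `(A, P)` be a Poisson algebra with Poisson 2-form `π` and Poisson–Rinehart
bracket `B` on `Ω := Ω[A⁄R]`, and let `θ : Ω → A` be an `A`-linear Poisson
potential: `π α β = π (α, D (θ β)) − π (β, D (θ α)) − θ [α,β]`.  Define
`conn α a := π α (D a) − a * θ α`.  Then `conn` is a connection on the rank-one
free `A`-module `A` and its curvature equals `−π`; in particular a Poisson
algebra whose Poisson 2-form admits a Poisson potential is representable. -/
theorem poisson_potential_gives_connection
    (R A : Type*) [CommRing R] [CommRing A] [Algebra R A]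
    (P : A →ₗ[R] A →ₗ[R] A)
    (hPalt : ∀ a : A, P a a = 0)
    (hPjac : ∀ a b c : A, P a (P b c) + P b (P c a) + P c (P a b) = 0)
    (hPleib : ∀ a b c : A, P (a * b) c = a * P b c + P a c * b)
    (π : KaehlerDifferential R A →ₗ[A] KaehlerDifferential R A →ₗ[A] A)
    (hπalt : ∀ α, π α α = 0)
    (hπD : ∀ u v : A,
      π (KaehlerDifferential.D R A u) (KaehlerDifferential.D R A v) = P u v)
    (B : KaehlerDifferential R A →ₗ[R] KaehlerDifferential R A →ₗ[R]
        KaehlerDifferential R A)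
    (hB : ∀ a b u v : A,
      B (a • KaehlerDifferential.D R A u) (b • KaehlerDifferential.D R A v)
        = (a * P u b) • KaehlerDifferential.D R A v
          + (b * P a v) • KaehlerDifferential.D R A u
          + (a * b) • KaehlerDifferential.D R A (P u v))
    (hanch : ∀ (α β : KaehlerDifferential R A) (c : A),
      π (B α β) (KaehlerDifferential.D R A c)
        = π α (KaehlerDifferential.D R A (π β (KaehlerDifferential.D R A c)))
          - π β (KaehlerDifferential.D R A
              (π α (KaehlerDifferential.D R A c))))
    (θ : KaehlerDifferential R A →ₗ[A] A)
    (hθ : ∀ α β : KaehlerDifferential R A,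
      π α β = π α (KaehlerDifferential.D R A (θ β))
        - π β (KaehlerDifferential.D R A (θ α)) - θ (B α β))
    (conn : KaehlerDifferential R A → A → A)
    (hconn : ∀ (α : KaehlerDifferential R A) (a : A),
      conn α a = π α (KaehlerDifferential.D R A a) - a * θ α) :
    (∀ (b : A) (α : KaehlerDifferential R A) (a : A),
      conn (b • α) a = b * conn α a) ∧
    (∀ (α : KaehlerDifferential R A) (b a : A),
      conn α (b * a) = b * conn α a + π α (KaehlerDifferential.D R A b) * a) ∧
    (∀ (α β : KaehlerDifferential R A) (a : A),
      conn α (conn β a) - conn β (conn α a) - conn (B α β) a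
        = -(π α β) * a) := by
  have hD : ∀ x y : A, KaehlerDifferential.D R A (x * y)
      = x • KaehlerDifferential.D R A y + y • KaehlerDifferential.D R A x :=
    fun x y => Derivation.leibniz _ x y
  refine ⟨?_, ?_, ?_⟩
  · intro b α a
    simp only [hconn, map_smul, LinearMap.smul_apply, smul_eq_mul]
    ring
  · intro α b a
    simp only [hconn, hD, map_add, map_smul, smul_eq_mul]
    ring
  · intro α β a
    have h1 := hθ α β
    have h2 := hanch α β a
    simp only [hconn, map_sub, hD, map_add, map_smul, smul_eq_mul]
    linear_combination a * h1 - h2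
end

section
/- Let R be a commutative ring and A = R[u₁,u₂] the polynomial algebra in two variables (Mathlib's MvPolynomial (Fin 2) R, with u₁ = X 0 and u₂ = X 1). For every polynomial p ∈ A there is exactly one R-bilinear bracket {·,·} : A × A → A that is a derivation in each argument (i.e. {fg,h} = f{g,h} + g{f,h} and {f,gh} = g{f,h} + h{f,g}), is alternating ({f,f} = 0), and satisfies {u₁,u₂} = p. Moreover this bracket satisfies the Jacobi identity, and hence defines a Poisson structure on A. (Example 3.19: Poisson structures on the polynomial algebra in two variables.) -/
section Aux

open MvPolynomial

variable {R : Type*} [CommRing R]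

lemma pderiv_comm' (i j : Fin 2) (f : MvPolynomial (Fin 2) R) :
    pderiv i (pderiv j f) = pderiv j (pderiv i f) := by
  induction f using MvPolynomial.induction_on with
  | C a => simp
  | add q r hq hr => simp [hq, hr]
  | mul_X q k hq =>
      have h0 : ∀ a b : Fin 2, pderiv a (pderiv b (X k : MvPolynomial (Fin 2) R)) = 0 := by
        intro a b
        rcases eq_or_ne k b with h | h
        · subst h; simp
        · simp [pderiv_X_of_ne h]
      simp only [pderiv_mul, map_add, hq, h0]
      ring

noncomputable def canBr (p : MvPolynomial (Fin 2) R) :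
    MvPolynomial (Fin 2) R →ₗ[R] MvPolynomial (Fin 2) R →ₗ[R] MvPolynomial (Fin 2) R :=
  LinearMap.mk₂ R
    (fun f g => p * (pderiv 0 f * pderiv 1 g - pderiv 1 f * pderiv 0 g))
    (by intro f f' g; simp [map_add]; ring)
    (by intro c f g; simp [mul_sub, smul_sub, mul_smul_comm, mul_assoc])
    (by intro f g g'; simp [map_add]; ring)
    (by intro c f g; simp [mul_sub, smul_sub, mul_smul_comm, mul_assoc])

lemma canBr_apply (p f g : MvPolynomial (Fin 2) R) :
    canBr p f g = p * (pderiv 0 f * pderiv 1 g - pderiv 1 f * pderiv 0 g) := rfl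

lemma canBr_leib1 (p f g h : MvPolynomial (Fin 2) R) :
    canBr p (f * g) h = f * canBr p g h + g * canBr p f h := by
  simp only [canBr_apply, pderiv_mul]; ring

lemma canBr_leib2 (p f g h : MvPolynomial (Fin 2) R) :
    canBr p f (g * h) = g * canBr p f h + h * canBr p f g := by
  simp only [canBr_apply, pderiv_mul]; ring

lemma canBr_alt (p f : MvPolynomial (Fin 2) R) : canBr p f f = 0 := by
  simp only [canBr_apply]; ring

lemma canBr_X01 (p : MvPolynomial (Fin 2) R) : canBr p (X 0) (X 1) = p := by
  simp [canBr_apply, pderiv_X_self, pderiv_X_of_ne (show (0:Fin 2) ≠ 1 by decide),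
    pderiv_X_of_ne (show (1:Fin 2) ≠ 0 by decide)]

lemma canBr_jacobi (p f g h : MvPolynomial (Fin 2) R) :
    canBr p f (canBr p g h) + canBr p g (canBr p h f) + canBr p h (canBr p f g) = 0 := by
  simp only [canBr_apply, map_sub, pderiv_mul, pderiv_comm' 1 0]
  ring

open MvPolynomial

variable {R : Type*} [CommRing R]

lemma br_eq (p : MvPolynomial (Fin 2) R)
    (Br : MvPolynomial (Fin 2) R →ₗ[R] MvPolynomial (Fin 2) R →ₗ[R] MvPolynomial (Fin 2) R)
    (hL1 : ∀ f g h : MvPolynomial (Fin 2) R, Br (f * g) h = f * Br g h + g * Br f h)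
    (hL2 : ∀ f g h : MvPolynomial (Fin 2) R, Br f (g * h) = g * Br f h + h * Br f g)
    (halt : ∀ f : MvPolynomial (Fin 2) R, Br f f = 0)
    (hX : Br (X 0) (X 1) = p) :
    ∀ f g, Br f g = canBr p f g := by
  have hanti : ∀ f g, Br g f = - Br f g := by
    intro f g
    have h1 := halt (f + g)
    simp only [map_add, LinearMap.add_apply, halt] at h1
    linear_combination h1
  have hone : ∀ h, Br 1 h = 0 := by
    intro h
    have := hL1 1 1 h
    simp only [one_mul] at this
    exact left_eq_add.mp this
  have hC : ∀ (r : R) h, Br (C r) h = 0 := by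
    intro r h
    rw [show (C r : MvPolynomial (Fin 2) R) = r • 1 by rw [smul_eq_C_mul, mul_one],
      map_smul, LinearMap.smul_apply, hone, smul_zero]
  have hC2 : ∀ (r : R) h, Br h (C r) = 0 := by
    intro r h; rw [hanti, hC, neg_zero]
  have h10 : Br (X 1) (X 0) = -p := by rw [hanti, hX]
  have c10 : canBr p (X 1) (X 0) = -p := by
    simp [canBr_apply, pderiv_X_self, pderiv_X_of_ne (show (0:Fin 2) ≠ 1 by decide),
      pderiv_X_of_ne (show (1:Fin 2) ≠ 0 by decide)]
  have hXX : ∀ i j : Fin 2, Br (X i) (X j) = canBr p (X i) (X j) := by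
    intro i j
    fin_cases i <;> fin_cases j
    · show Br (X 0) (X 0) = canBr p (X 0) (X 0); rw [halt, canBr_alt]
    · show Br (X 0) (X 1) = canBr p (X 0) (X 1); rw [hX, canBr_X01]
    · show Br (X 1) (X 0) = canBr p (X 1) (X 0); rw [h10, c10]
    · show Br (X 1) (X 1) = canBr p (X 1) (X 1); rw [halt, canBr_alt]
  have step1 : ∀ (i : Fin 2) g, Br (X i) g = canBr p (X i) g := by
    intro i g
    induction g using MvPolynomial.induction_on with
    | C a => rw [hC2]; rw [canBr_apply]; simp
    | add q r hq hr => simp [hq, hr]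
    | mul_X q k hq => rw [hL2, canBr_leib2, hq, hXX]
  intro f g
  induction f using MvPolynomial.induction_on with
  | C a => rw [hC]; rw [canBr_apply]; simp
  | add q r hq hr => simp [hq, hr]
  | mul_X q k hq => rw [hL1, canBr_leib1, hq, step1]

end Aux


/-- **Example 3.19** (Poisson structures on the polynomial algebra in two
variables).  Let `A = R[u₁, u₂] = MvPolynomial (Fin 2) R` and `p ∈ A`.  There
is exactly one `R`-bilinear bracket on `A` that is a derivation in each
argument, is alternating, and satisfies `{u₁, u₂} = p`; moreover this bracket
satisfies the Jacobi identity, hence defines a Poisson structure on `A`. -/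
theorem polynomial_two_variables_poisson_structure
    (R : Type*) [CommRing R] (p : MvPolynomial (Fin 2) R) :
    (∃! Br : MvPolynomial (Fin 2) R →ₗ[R] MvPolynomial (Fin 2) R →ₗ[R]
        MvPolynomial (Fin 2) R,
      (∀ f g h : MvPolynomial (Fin 2) R,
        Br (f * g) h = f * Br g h + g * Br f h) ∧
      (∀ f g h : MvPolynomial (Fin 2) R,
        Br f (g * h) = g * Br f h + h * Br f g) ∧
      (∀ f : MvPolynomial (Fin 2) R, Br f f = 0) ∧
      Br (MvPolynomial.X 0) (MvPolynomial.X 1) = p) ∧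
    (∀ Br : MvPolynomial (Fin 2) R →ₗ[R] MvPolynomial (Fin 2) R →ₗ[R]
        MvPolynomial (Fin 2) R,
      (∀ f g h : MvPolynomial (Fin 2) R,
        Br (f * g) h = f * Br g h + g * Br f h) →
      (∀ f g h : MvPolynomial (Fin 2) R,
        Br f (g * h) = g * Br f h + h * Br f g) →
      (∀ f : MvPolynomial (Fin 2) R, Br f f = 0) →
      Br (MvPolynomial.X 0) (MvPolynomial.X 1) = p →
      ∀ f g h : MvPolynomial (Fin 2) R,
        Br f (Br g h) + Br g (Br h f) + Br h (Br f g) = 0) := by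
  open MvPolynomial in
  constructor
  · refine ⟨canBr p, ⟨canBr_leib1 p, canBr_leib2 p, canBr_alt p, canBr_X01 p⟩, ?_⟩
    intro Br ⟨h1, h2, h3, h4⟩
    exact LinearMap.ext fun f => LinearMap.ext fun g => br_eq p Br h1 h2 h3 h4 f g
  · intro Br h1 h2 h3 h4 f g h
    simp only [br_eq p Br h1 h2 h3 h4]
    exact canBr_jacobi p f g h
end

section
/- On the phase space E = (Fin 4 → ℝ) × (Fin 4 → ℝ) with points written (x,p), define for smooth functions g, h : E → ℝ the canonical Poisson bracket {g,h}(z) = Σ_{j∈Fin 4} ( ∂g/∂p_j(z) · ∂h/∂x_j(z) − ∂g/∂x_j(z) · ∂h/∂p_j(z) ), the operator V by (V f)(z) = Σ_{j∈Fin 4} p_j · ∂f/∂p_j(z), and J(x,p) = (p 0)² − (p 1)² − (p 2)² − (p 3)². Then for every infinitely differentiable f : E → ℝ the identity {J, V f} = V({J, f}) − {J, f} holds at every point of E. (Identity (5.4.2), the key step in the proof of Theorem 5.4 that the symplectic potential descends to a Poisson potential for the reduced Poisson algebra.) -/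
noncomputable section PhaseSpace

/-- The phase space of four-dimensional Minkowski space, with points `(x, p)`. -/
abbrev PhaseSpace : Type := (Fin 4 → ℝ) × (Fin 4 → ℝ)

/-- Partial derivative in the `j`-th position variable `x_j`. -/
def partialX (g : PhaseSpace → ℝ) (j : Fin 4) (z : PhaseSpace) : ℝ :=
  fderiv ℝ g z (Pi.single j 1, 0)

/-- Partial derivative in the `j`-th momentum variable `p_j`. -/
def partialP (g : PhaseSpace → ℝ) (j : Fin 4) (z : PhaseSpace) : ℝ :=
  fderiv ℝ g z (0, Pi.single j 1)

/-- The canonical Poisson bracket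
`{g,h}(z) = Σ_j (∂g/∂p_j · ∂h/∂x_j − ∂g/∂x_j · ∂h/∂p_j)(z)`. -/
def poissonBracket (g h : PhaseSpace → ℝ) (z : PhaseSpace) : ℝ :=
  ∑ j : Fin 4, (partialP g j z * partialX h j z - partialX g j z * partialP h j z)

/-- The operator `(V f)(z) = Σ_j p_j · ∂f/∂p_j (z)`. -/
def momentumEuler (f : PhaseSpace → ℝ) (z : PhaseSpace) : ℝ :=
  ∑ j : Fin 4, z.2 j * partialP f j z

/-- The zero-rest-mass constraint `J (x,p) = p₀² − p₁² − p₂² − p₃²`. -/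
def constraintJ (z : PhaseSpace) : ℝ :=
  (z.2 0) ^ 2 - (z.2 1) ^ 2 - (z.2 2) ^ 2 - (z.2 3) ^ 2

end PhaseSpace

noncomputable section Aux

/-- coordinate continuous linear map `w ↦ w.2 j` -/
def Lp (j : Fin 4) : PhaseSpace →L[ℝ] ℝ :=
  (ContinuousLinearMap.proj j).comp (ContinuousLinearMap.snd ℝ (Fin 4 → ℝ) (Fin 4 → ℝ))

@[simp] lemma Lp_apply (j : Fin 4) (v : PhaseSpace) : Lp j v = v.2 j := rfl

def cJ : Fin 4 → ℝ := ![2, -2, -2, -2]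

lemma hasFDerivAt_coord (j : Fin 4) (z : PhaseSpace) :
    HasFDerivAt (fun w : PhaseSpace => w.2 j) (Lp j) z :=
  (Lp j).hasFDerivAt

lemma hasFDerivAt_J (z : PhaseSpace) :
    HasFDerivAt constraintJ
      ((2 * z.2 0) • Lp 0 - (2 * z.2 1) • Lp 1 - (2 * z.2 2) • Lp 2 - (2 * z.2 3) • Lp 3) z := by
  have h2 : ∀ i : Fin 4, HasFDerivAt (fun w : PhaseSpace => (w.2 i) ^ 2)
      ((2 * z.2 i) • Lp i) z := by
    intro i
    have := (hasFDerivAt_coord i z).fun_mul (hasFDerivAt_coord i z)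
    simpa [pow_two, two_mul, add_smul] using this
  exact (((h2 0).sub (h2 1)).sub (h2 2)).sub (h2 3)

lemma fderiv_J_apply (z : PhaseSpace) (v : PhaseSpace) :
    fderiv ℝ constraintJ z v
      = 2 * z.2 0 * v.2 0 - 2 * z.2 1 * v.2 1 - 2 * z.2 2 * v.2 2 - 2 * z.2 3 * v.2 3 := by
  rw [(hasFDerivAt_J z).fderiv]
  simp [mul_comm]

@[simp] lemma partialX_J (j : Fin 4) (z : PhaseSpace) : partialX constraintJ j z = 0 := by
  simp [partialX, fderiv_J_apply]

@[simp] lemma partialP_J (j : Fin 4) (z : PhaseSpace) :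
    partialP constraintJ j z = cJ j * z.2 j := by
  rw [partialP, fderiv_J_apply]
  fin_cases j <;> simp [cJ, Pi.single_apply]

lemma bracketJ_eq (g : PhaseSpace → ℝ) (z : PhaseSpace) :
    poissonBracket constraintJ g z = ∑ j : Fin 4, cJ j * z.2 j * partialX g j z := by
  simp [poissonBracket]

end Aux

/-- **Identity (5.4.2).**
For every infinitely differentiable `f` on the phase space and every point `z`,
`{J, V f}(z) = V ({J, f})(z) − {J, f}(z)`. -/
theorem constraint_bracket_identity
    (f : PhaseSpace → ℝ) (hf : ContDiff ℝ (⊤ : ℕ∞) f) (z : PhaseSpace) :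
    poissonBracket constraintJ (fun w => momentumEuler f w) z
      = momentumEuler (fun w => poissonBracket constraintJ f w) z
        - poissonBracket constraintJ f z := by
  -- second derivative
  have hF : ContDiff ℝ (⊤ : ℕ∞) (fderiv ℝ f) := hf.fderiv_right (by exact_mod_cast le_top)
  set D := fderiv ℝ (fderiv ℝ f) z with hD
  have hsymm : ∀ v w : PhaseSpace, D v w = D w v := fun v w =>
    second_derivative_symmetric (fun y => (hf.differentiable (by simp) y).hasFDerivAt)
      ((hF.differentiable (by simp) z).hasFDerivAt) v w
  -- derivative of directional derivative
  have hmixed : ∀ v : PhaseSpace, HasFDerivAt (fun w => fderiv ℝ f w v)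
      ((ContinuousLinearMap.apply ℝ ℝ v).comp D) z := by
    intro v
    exact (ContinuousLinearMap.apply ℝ ℝ v).hasFDerivAt.comp z
      ((hF.differentiable (by simp) z).hasFDerivAt)
  set ex : Fin 4 → PhaseSpace := fun j => ((Pi.single j 1 : Fin 4 → ℝ), 0) with hex
  set ep : Fin 4 → PhaseSpace := fun j => ((0 : Fin 4 → ℝ), Pi.single j 1) with hep
  -- derivative of V f
  have hVf : HasFDerivAt (fun w => momentumEuler f w)
      (∑ k : Fin 4, (z.2 k • ((ContinuousLinearMap.apply ℝ ℝ (ep k)).comp D)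
        + (fderiv ℝ f z (ep k)) • Lp k)) z := by
    have : ∀ k : Fin 4, HasFDerivAt (fun w : PhaseSpace => w.2 k * fderiv ℝ f w (ep k))
        (z.2 k • ((ContinuousLinearMap.apply ℝ ℝ (ep k)).comp D)
          + (fderiv ℝ f z (ep k)) • Lp k) z := fun k =>
      (hasFDerivAt_coord k z).mul (hmixed (ep k))
    have hsum := HasFDerivAt.fun_sum (fun k (_ : k ∈ Finset.univ) => this k)
    simpa [momentumEuler, partialP] using hsum
  -- derivative of {J, f}
  have hJf : HasFDerivAt (fun w => poissonBracket constraintJ f w)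
      (∑ j : Fin 4, ((cJ j * z.2 j) • ((ContinuousLinearMap.apply ℝ ℝ (ex j)).comp D)
        + (fderiv ℝ f z (ex j)) • (cJ j • Lp j))) z := by
    have : ∀ j : Fin 4, HasFDerivAt (fun w : PhaseSpace => (cJ j * w.2 j) * fderiv ℝ f w (ex j))
        ((cJ j * z.2 j) • ((ContinuousLinearMap.apply ℝ ℝ (ex j)).comp D)
          + (fderiv ℝ f z (ex j)) • (cJ j • Lp j)) z := fun j =>
      ((hasFDerivAt_coord j z).const_mul (cJ j)).mul (hmixed (ex j))
    have hsum := HasFDerivAt.fun_sum (fun j (_ : j ∈ Finset.univ) => this j)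
    have heq : (fun w => poissonBracket constraintJ f w)
        = fun w => ∑ j : Fin 4, (cJ j * w.2 j) * fderiv ℝ f w (ex j) := by
      funext w
      simp [bracketJ_eq, partialX, mul_assoc, hex]
    rw [heq]
    exact hsum
  -- compute the three pieces
  rw [bracketJ_eq]
  have hXVf : ∀ j : Fin 4, partialX (fun w => momentumEuler f w) j z
      = ∑ k : Fin 4, z.2 k * D (ex j) (ep k) := by
    intro j
    rw [partialX, hVf.fderiv]
    simp [hex, hep]
  have hPJf : ∀ k : Fin 4, partialP (fun w => poissonBracket constraintJ f w) k z
      = cJ k * fderiv ℝ f z (ex k) + ∑ j : Fin 4, cJ j * z.2 j * D (ep k) (ex j) := by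
    intro k
    rw [partialP, hJf.fderiv]
    simp only [ContinuousLinearMap.sum_apply, ContinuousLinearMap.add_apply,
      ContinuousLinearMap.smul_apply, ContinuousLinearMap.comp_apply,
      ContinuousLinearMap.apply_apply, Lp_apply, smul_eq_mul]
    have : ∀ j : Fin 4, fderiv ℝ f z (ex j) * (cJ j * (ep k).2 j)
        = (if j = k then cJ k * fderiv ℝ f z (ex k) else 0) := by
      intro j
      rcases eq_or_ne j k with h | h
      · subst h; simp [hep, Pi.single_apply]; ring
      · simp [hep, Pi.single_apply, h]
    rw [Finset.sum_add_distrib]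
    have this' : ∀ j : Fin 4, fderiv ℝ f z (ex j) * (cJ j * (Pi.single k 1 : Fin 4 → ℝ) j)
        = (if j = k then cJ k * fderiv ℝ f z (ex k) else 0) := this
    simp only [this', Finset.sum_ite_eq, Finset.sum_ite_eq', Finset.mem_univ, if_true]
    simp only [hep]
    exact add_comm _ _
  have hL : ∑ j : Fin 4, cJ j * z.2 j * partialX (fun w => momentumEuler f w) j z
      = ∑ j : Fin 4, cJ j * z.2 j * ∑ k : Fin 4, z.2 k * D (ex j) (ep k) :=
    Finset.sum_congr rfl fun j _ => by rw [hXVf]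
  have hR : momentumEuler (fun w => poissonBracket constraintJ f w) z
      = ∑ k : Fin 4, z.2 k * (cJ k * fderiv ℝ f z (ex k)
          + ∑ j : Fin 4, cJ j * z.2 j * D (ep k) (ex j)) := by
    rw [momentumEuler]
    exact Finset.sum_congr rfl fun k _ => by rw [hPJf]
  have hB : poissonBracket constraintJ f z
      = ∑ j : Fin 4, cJ j * z.2 j * fderiv ℝ f z (ex j) := by
    rw [bracketJ_eq]
    exact Finset.sum_congr rfl fun j _ => by rw [partialX, hex]
  rw [hL, hR, hB]
  have h1 : ∑ k : Fin 4, z.2 k * (cJ k * fderiv ℝ f z (ex k)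
        + ∑ j : Fin 4, cJ j * z.2 j * D (ep k) (ex j))
      = (∑ j : Fin 4, cJ j * z.2 j * fderiv ℝ f z (ex j))
        + ∑ k : Fin 4, ∑ j : Fin 4, z.2 k * (cJ j * z.2 j * D (ep k) (ex j)) := by
    simp only [mul_add, Finset.mul_sum, Finset.sum_add_distrib]
    congr 1
    exact Finset.sum_congr rfl fun k _ => by ring
  rw [h1, add_sub_cancel_left]
  simp only [Finset.mul_sum]
  rw [Finset.sum_comm]
  refine Finset.sum_congr rfl fun k _ => Finset.sum_congr rfl fun j _ => ?_
  rw [hsymm (ex j) (ep k)]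
  ring
end
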